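/- arXiv:1101.1251 — 7 statements merged into one kernel-verified Lean document; each statement's English description precedes it below -/
import Mathlib

section
/- If f is analytic on the upper half-plane Π and f(z) = a^0 + a^1(z-x) + ... + a^n(z-x)^n + o((z-x)^n) as z → x nontangentially, then for each k = 0,...,n the derivative f^{(k)} has nontangential limit k! a^k at x, i.e. lim_{z→x nontangentially} f^{(k)}(z)/k! = a^k. -/
open Complex Filter Finset Metric Set

noncomputable section

/-- The open upper half-plane. -/
def UHP : Set ℂ := {z : ℂ | 0 < z.im}

/-- The Pick class: analytic functions on the upper half-plane with nonnegative
imaginary part there. -/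
def IsPick (f : ℂ → ℂ) : Prop :=
  DifferentiableOn ℂ f UHP ∧ ∀ z ∈ UHP, 0 ≤ (f z).im

/-- A nontangential approach region at `x ∈ ℝ` with aperture `K`. -/
def ntRegion (x K : ℝ) : Set ℂ := {z : ℂ | 0 < z.im ∧ ‖z - x‖ ≤ K * z.im}

/-- `f z → L` as `z → x` nontangentially in the upper half-plane. -/
def NTTendsto (f : ℂ → ℂ) (x : ℝ) (L : ℂ) : Prop :=
  ∀ K > 0, Tendsto f (nhdsWithin (x : ℂ) (ntRegion x K)) (nhds L)

/-- `r z = o((z-x)^n)` as `z → x` nontangentially. -/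
def NTLittleO (r : ℂ → ℂ) (x : ℝ) (n : ℕ) : Prop :=
  NTTendsto (fun z => r z / (z - (x : ℂ)) ^ n) x 0

/-- `f` has the pseudo-Taylor expansion of order `n` about `x` with coefficients `c`. -/
def HasPseudoTaylor (f : ℂ → ℂ) (x : ℝ) (n : ℕ) (c : ℕ → ℂ) : Prop :=
  NTLittleO (fun z => f z - ∑ j ∈ Finset.range (n + 1), c j * (z - (x : ℂ)) ^ j) x n


lemma deriv_monomial (c w : ℂ) (m : ℕ) :
    deriv (fun z => c * (z - w) ^ m) = fun z => c * m * (z - w) ^ (m - 1) := by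
  funext z
  have h : HasDerivAt (fun z : ℂ => c * (z - w) ^ m)
      (c * ((m : ℂ) * (z - w) ^ (m - 1) * 1)) z :=
    (((hasDerivAt_id z).sub_const w).pow m).const_mul c
  rw [h.deriv]; ring

lemma iteratedDeriv_monomial (c w : ℂ) (j : ℕ) : ∀ k : ℕ,
    iteratedDeriv k (fun z => c * (z - w) ^ j)
      = fun z => c * (j.descFactorial k : ℂ) * (z - w) ^ (j - k) := by
  intro k
  induction k with
  | zero => simp
  | succ k ih =>
    rw [iteratedDeriv_succ, ih, deriv_monomial]
    funext z
    rw [Nat.descFactorial_succ]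
    push_cast
    rw [Nat.sub_sub]
    ring

lemma iteratedDeriv_add' {f g : ℂ → ℂ} {k : ℕ} (hf : ContDiff ℂ (k : ℕ∞) f)
    (hg : ContDiff ℂ (k : ℕ∞) g) (z : ℂ) :
    iteratedDeriv k (fun w => f w + g w) z = iteratedDeriv k f z + iteratedDeriv k g z := by
  have := iteratedDerivWithin_add (mem_univ z) uniqueDiffOn_univ
    (hf.contDiffOn (s := univ) z (mem_univ z)) (hg.contDiffOn (s := univ) z (mem_univ z))
  simpa [iteratedDerivWithin_univ, Pi.add_def] using this

lemma iteratedDeriv_finsum {ι : Type*} (s : Finset ι) (F : ι → ℂ → ℂ) (k : ℕ)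
    (hF : ∀ i ∈ s, ContDiff ℂ (k : ℕ∞) (F i)) (z : ℂ) :
    iteratedDeriv k (fun w => ∑ i ∈ s, F i w) z = ∑ i ∈ s, iteratedDeriv k (F i) z := by
  classical
  induction s using Finset.induction with
  | empty =>
    simp [iteratedDeriv_eq_iterate]
  | @insert i s' hi ih =>
    rw [Finset.sum_insert hi]
    have h1 : (fun w => ∑ j ∈ insert i s', F j w)
        = fun w => F i w + ∑ j ∈ s', F j w := by
      funext w; rw [Finset.sum_insert hi]
    rw [h1, iteratedDeriv_add' (hF i (Finset.mem_insert_self i s'))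
      (ContDiff.sum fun j hj => hF j (Finset.mem_insert_of_mem hj)) z,
      ih fun j hj => hF j (Finset.mem_insert_of_mem hj)]

lemma cauchy_bound {g : ℂ → ℂ} {c : ℂ} {R M : ℝ} (hR : 0 < R)
    (hg : DifferentiableOn ℂ g (Metric.closedBall c R))
    (hM : ∀ w ∈ Metric.sphere c R, ‖g w‖ ≤ M) (k : ℕ) :
    ‖iteratedDeriv k g c‖ ≤ k.factorial * M / R ^ k := by
  set Rn : NNReal := ⟨R, hR.le⟩ with hRn
  have hRn0 : 0 < Rn := by exact_mod_cast hR
  have hps : HasFPowerSeriesOnBall g (cauchyPowerSeries g c Rn) c Rn :=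
    hg.hasFPowerSeriesOnBall hRn0
  set p := cauchyPowerSeries g c Rn with hp
  have h1 : iteratedDeriv k g c = k.factorial • p k (fun _ => (1 : ℂ)) := by
    rw [iteratedDeriv_eq_iteratedFDeriv, ← hps.factorial_smul 1 k]
  have h2 : ‖iteratedDeriv k g c‖ ≤ (k.factorial : ℝ) * ‖p k‖ := by
    rw [h1, nsmul_eq_mul, norm_mul, Complex.norm_natCast]
    gcongr
    calc ‖p k (fun _ => (1:ℂ))‖ ≤ ‖p k‖ * ∏ _i : Fin k, ‖(1:ℂ)‖ :=
          (p k).le_opNorm _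
      _ = ‖p k‖ := by simp
  have hInt : IntervalIntegrable (fun θ => ‖g (circleMap c Rn θ)‖) MeasureTheory.volume 0 (2 * Real.pi) := by
    apply ContinuousOn.intervalIntegrable
    apply ContinuousOn.norm
    apply hg.continuousOn.comp (continuous_circleMap c Rn).continuousOn
    intro θ _
    exact sphere_subset_closedBall (circleMap_mem_sphere c (by exact_mod_cast hR.le) θ)
  have hIle : (∫ θ in (0:ℝ)..2 * Real.pi, ‖g (circleMap c Rn θ)‖) ≤ 2 * Real.pi * M := by
    calc (∫ θ in (0:ℝ)..2 * Real.pi, ‖g (circleMap c Rn θ)‖)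
        ≤ ∫ _θ in (0:ℝ)..2 * Real.pi, M := by
          apply intervalIntegral.integral_mono_on Real.two_pi_pos.le hInt
            intervalIntegrable_const
          intro θ _
          exact hM _ (circleMap_mem_sphere c (by exact_mod_cast hR.le) θ)
      _ = 2 * Real.pi * M := by simp [mul_comm]
  have h3 : ‖p k‖ ≤ M * |(Rn:ℝ)|⁻¹ ^ k := by
    refine (norm_cauchyPowerSeries_le g c Rn k).trans ?_
    have h4 : (2 * Real.pi)⁻¹ * (∫ θ in (0:ℝ)..2 * Real.pi, ‖g (circleMap c Rn θ)‖) ≤ M := by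
      rw [inv_mul_le_iff₀ Real.two_pi_pos]
      linarith [hIle]
    exact mul_le_mul_of_nonneg_right h4 (by positivity)
  have hRabs : |(Rn : ℝ)| = R := abs_of_pos hR
  calc ‖iteratedDeriv k g c‖ ≤ (k.factorial : ℝ) * (M * |(Rn:ℝ)|⁻¹ ^ k) := by
        refine h2.trans ?_
        gcongr
    _ = k.factorial * M / R ^ k := by
        rw [hRabs, inv_pow]
        ring

theorem pseudoTaylor_implies_nontangential_derivatives (f : ℂ → ℂ) (x : ℝ) (n : ℕ) (a : ℕ → ℂ)
    (hf : DifferentiableOn ℂ f UHP)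
    (hexp : HasPseudoTaylor f x n a) :
    ∀ k ≤ n, NTTendsto (fun z => iteratedDeriv k f z / (Nat.factorial k)) x (a k) := by
  classical
  have hopen : IsOpen UHP := by
    have h : UHP = {z : ℂ | 0 < z.im} := rfl
    rw [h]
    exact isOpen_lt continuous_const Complex.continuous_im
  set P : ℂ → ℂ := fun z => ∑ j ∈ Finset.range (n + 1), a j * (z - (x : ℂ)) ^ j with hPdef
  have hPmono : ∀ j : ℕ, ContDiff ℂ (⊤ : ℕ∞) (fun z : ℂ => a j * (z - (x : ℂ)) ^ j) :=
    fun j => contDiff_const.mul ((contDiff_id.sub contDiff_const).pow j)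
  have hPcd : ContDiff ℂ (⊤ : ℕ∞) P := ContDiff.sum fun j _ => hPmono j
  set g : ℂ → ℂ := fun z => f z - P z with hgdef
  have hgd : DifferentiableOn ℂ g UHP :=
    hf.sub (hPcd.differentiable (by simp)).differentiableOn
  intro k hk K hK
  have hfact : ((k.factorial : ℂ)) ≠ 0 := by exact_mod_cast k.factorial_ne_zero
  have hPder : ∀ z : ℂ, iteratedDeriv k P z
      = ∑ j ∈ Finset.range (n + 1), a j * (j.descFactorial k : ℂ) * (z - (x : ℂ)) ^ (j - k) := by
    intro z
    rw [hPdef, iteratedDeriv_finsum _ _ k (fun j _ => (hPmono j).of_le (by exact_mod_cast le_top)) z]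
    refine Finset.sum_congr rfl fun j _ => ?_
    rw [iteratedDeriv_monomial]
  have hPlim : Tendsto (fun z => iteratedDeriv k P z / (k.factorial : ℂ))
      (nhdsWithin (x : ℂ) (ntRegion x K)) (nhds (a k)) := by
    have hcont : Continuous (fun z : ℂ => ∑ j ∈ Finset.range (n + 1),
        a j * (j.descFactorial k : ℂ) * (z - (x : ℂ)) ^ (j - k)) := by fun_prop
    have hval : ∑ j ∈ Finset.range (n + 1),
        a j * (j.descFactorial k : ℂ) * ((x : ℂ) - (x : ℂ)) ^ (j - k)
        = (k.factorial : ℂ) * a k := by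
      rw [sub_self, Finset.sum_eq_single k]
      · simp [Nat.descFactorial_self]; ring
      · intro j hj hne
        rcases lt_or_gt_of_ne hne with h | h
        · simp [Nat.descFactorial_eq_zero_iff_lt.mpr h]
        · simp [zero_pow (Nat.sub_ne_zero_of_lt h)]
      · intro hkmem
        exact absurd (Finset.mem_range.mpr (Nat.lt_succ_of_le hk)) hkmem
    have h1 : Tendsto (fun z : ℂ => iteratedDeriv k P z)
        (nhdsWithin (x : ℂ) (ntRegion x K)) (nhds ((k.factorial : ℂ) * a k)) := by
      have h2 := (hcont.tendsto (x : ℂ)).mono_left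
        (nhdsWithin_le_nhds (s := ntRegion x K))
      rw [hval] at h2
      exact h2.congr fun z => (hPder z).symm
    have h3 := h1.div_const (k.factorial : ℂ)
    have h4 : (k.factorial : ℂ) * a k / (k.factorial : ℂ) = a k := by
      field_simp
    rwa [h4] at h3
  have hglim : Tendsto (fun z => iteratedDeriv k g z)
      (nhdsWithin (x : ℂ) (ntRegion x K)) (nhds 0) := by
    rw [Metric.tendsto_nhdsWithin_nhds]
    intro ε hε
    set C : ℝ := k.factorial * ((3 / 2) ^ n * (2 * K) ^ k) + 1 with hC
    have hCnn : (0 : ℝ) ≤ k.factorial * ((3 / 2) ^ n * (2 * K) ^ k) := by positivity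
    have hC1 : 1 ≤ C := by rw [hC]; linarith
    have hCpos : 0 < C := by linarith
    have hε' : 0 < ε / C := by positivity
    have h0 : Tendsto (fun z => g z / (z - (x : ℂ)) ^ n)
        (nhdsWithin (x : ℂ) (ntRegion x (2 * K + 1))) (nhds 0) :=
      hexp (2 * K + 1) (by positivity)
    rw [Metric.tendsto_nhdsWithin_nhds] at h0
    obtain ⟨δ0, hδ0, hδ⟩ := h0 (ε / C) hε'
    refine ⟨min (2 / 3 * δ0) 1, by positivity, ?_⟩
    intro z hz hdist
    obtain ⟨hzim, hzK⟩ := hz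
    set d : ℝ := ‖z - (x : ℂ)‖ with hd
    have hdist' : dist z (x : ℂ) = d := Complex.dist_eq z x
    have him_le : z.im ≤ d := by
      calc z.im = (z - (x : ℂ)).im := by simp [Complex.sub_im]
        _ ≤ |(z - (x : ℂ)).im| := le_abs_self _
        _ ≤ d := Complex.abs_im_le_norm _
    have hd_pos : 0 < d := lt_of_lt_of_le hzim him_le
    have hd1 : d ≤ 1 := by
      rw [hdist'] at hdist
      have := lt_of_lt_of_le hdist (min_le_right _ _)
      linarith
    have hdδ : (3 / 2) * d < δ0 := by
      rw [hdist'] at hdist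
      have := lt_of_lt_of_le hdist (min_le_left _ _)
      linarith
    set r : ℝ := z.im / 2 with hr
    have hr_pos : 0 < r := by positivity
    have him_of_ball : ∀ w : ℂ, ‖w - z‖ ≤ r → r ≤ w.im := by
      intro w hw
      have h2 : |(w - z).im| ≤ r := (Complex.abs_im_le_norm _).trans hw
      have h3 := abs_le.mp h2
      have h4 : z.im - r ≤ w.im := by
        have := h3.1
        simp only [Complex.sub_im] at this
        linarith
      rw [hr] at h4 ⊢
      linarith
    have hball : Metric.closedBall z r ⊆ UHP := by
      intro w hw
      rw [Metric.mem_closedBall, Complex.dist_eq] at hw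
      exact lt_of_lt_of_le hr_pos (him_of_ball w hw)
    have hM : ∀ w ∈ Metric.sphere z r, ‖g w‖ ≤ (ε / C) * ((3 / 2) * d) ^ n := by
      intro w hw
      rw [Metric.mem_sphere, Complex.dist_eq] at hw
      have hwim : r ≤ w.im := him_of_ball w hw.le
      have hwim_pos : 0 < w.im := lt_of_lt_of_le hr_pos hwim
      have htri : ‖w - (x : ℂ)‖ ≤ ‖w - z‖ + d := by
        have : w - (x : ℂ) = (w - z) + (z - (x : ℂ)) := by ring
        rw [this, hd]
        exact norm_add_le _ _
      have hrd : r ≤ d / 2 := by rw [hr]; linarith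
      have hwx : ‖w - (x : ℂ)‖ ≤ (3 / 2) * d := by
        rw [hw] at htri; linarith
      have hwreg : w ∈ ntRegion x (2 * K + 1) := by
        refine ⟨hwim_pos, ?_⟩
        calc ‖w - (x : ℂ)‖ ≤ r + d := by rw [hw] at htri; linarith
          _ ≤ r + K * z.im := by linarith [hzK]
          _ = (2 * K + 1) * r := by rw [hr]; ring
          _ ≤ (2 * K + 1) * w.im := by
              have h2K1 : (0 : ℝ) ≤ 2 * K + 1 := by positivity
              exact mul_le_mul_of_nonneg_left hwim h2K1
      have hwd : dist w (x : ℂ) < δ0 := by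
        rw [Complex.dist_eq]
        exact lt_of_le_of_lt hwx hdδ
      have hsmall := hδ hwreg hwd
      rw [dist_zero_right, norm_div, norm_pow] at hsmall
      have hwx_im : w.im ≤ ‖w - (x : ℂ)‖ := by
        calc w.im = (w - (x : ℂ)).im := by simp [Complex.sub_im]
          _ ≤ |(w - (x : ℂ)).im| := le_abs_self _
          _ ≤ ‖w - (x : ℂ)‖ := Complex.abs_im_le_norm _
      have hwx_pos : (0 : ℝ) < ‖w - (x : ℂ)‖ := lt_of_lt_of_le hwim_pos hwx_im
      have hgw : ‖g w‖ < (ε / C) * ‖w - (x : ℂ)‖ ^ n := by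
        rw [div_lt_iff₀ (pow_pos hwx_pos n)] at hsmall
        linarith [hsmall]
      refine hgw.le.trans ?_
      gcongr
    have hest := cauchy_bound hr_pos (hgd.mono hball) hM k
    rw [dist_zero_right]
    refine lt_of_le_of_lt hest ?_
    have h2K : (0 : ℝ) < 2 * K := by linarith
    have hrd2 : d / (2 * K) ≤ r := by
      rw [div_le_iff₀ h2K, hr]
      calc d ≤ K * z.im := hzK
        _ = z.im / 2 * (2 * K) := by ring
    have hdk_pos : 0 < (d / (2 * K)) ^ k := by positivity
    have hrk : (d / (2 * K)) ^ k ≤ r ^ k := pow_le_pow_left₀ (by positivity) hrd2 k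
    have hMnn : (0 : ℝ) ≤ (ε / C) * ((3 / 2) * d) ^ n := by positivity
    have key : (k.factorial : ℝ) * ((ε / C) * ((3 / 2) * d) ^ n) / r ^ k
        ≤ (C - 1) * (ε / C) := by
      calc (k.factorial : ℝ) * ((ε / C) * ((3 / 2) * d) ^ n) / r ^ k
          ≤ (k.factorial : ℝ) * ((ε / C) * ((3 / 2) * d) ^ n) / (d / (2 * K)) ^ k := by
            gcongr
        _ = (k.factorial : ℝ) * ((3 / 2) ^ n * (2 * K) ^ k) * (ε / C) * (d ^ n / d ^ k) := by
            rw [div_pow d, div_div_eq_mul_div]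
            ring
        _ ≤ (k.factorial : ℝ) * ((3 / 2) ^ n * (2 * K) ^ k) * (ε / C) * 1 := by
            have hdnk : d ^ n ≤ d ^ k := pow_le_pow_of_le_one hd_pos.le hd1 hk
            have : d ^ n / d ^ k ≤ 1 := by
              rw [div_le_one (pow_pos hd_pos k)]
              exact hdnk
            gcongr
        _ = (C - 1) * (ε / C) := by rw [hC]; ring
    refine lt_of_le_of_lt key ?_
    have heq : (C - 1) * (ε / C) = ε - ε / C := by
      field_simp
    rw [heq]
    linarith
  have h1 : Tendsto (fun z => iteratedDeriv k g z / (k.factorial : ℂ))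
      (nhdsWithin (x : ℂ) (ntRegion x K)) (nhds 0) := by
    simpa using hglim.div_const (k.factorial : ℂ)
  have hfinal : Tendsto
      (fun z => iteratedDeriv k g z / (k.factorial : ℂ) + iteratedDeriv k P z / (k.factorial : ℂ))
      (nhdsWithin (x : ℂ) (ntRegion x K)) (nhds (a k)) := by
    simpa using h1.add hPlim
  refine hfinal.congr' ?_
  filter_upwards [self_mem_nhdsWithin] with z hz
  have hzU : z ∈ UHP := hz.1
  have eW : ∀ F : ℂ → ℂ, iteratedDerivWithin k F UHP z = iteratedDeriv k F z := by
    intro F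
    rw [iteratedDerivWithin_eq_iteratedFDerivWithin, iteratedDeriv_eq_iteratedFDeriv,
      iteratedFDerivWithin_of_isOpen k hopen hzU]
  have hsub := iteratedDerivWithin_sub hzU hopen.uniqueDiffOn
    (hf.contDiffOn hopen (n := (k : ℕ∞)) z hzU) ((hPcd.of_le (WithTop.coe_le_coe.mpr (le_top : (k : ℕ∞) ≤ ⊤))).contDiffOn (s := UHP) z hzU)
  have hgP : g = f - P := by funext w; rfl
  have e : iteratedDeriv k g z = iteratedDeriv k f z - iteratedDeriv k P z := by
    rw [hgP, ← eW (f - P), hsub, eW, eW]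
  rw [e]
  field_simp
  ring
end
end

section
/- The function f(z) = z/(1 - z log z), defined on the upper half-plane using the principal branch of the logarithm, belongs to the Pick class and satisfies f(z) = z + o(z) as z → 0 nontangentially, but f has no pseudo-Taylor expansion of order 2 about 0. -/
open Complex Filter Finset Metric Set

noncomputable section

namespace PickAux

lemma w_im_neg {z : ℂ} (hz : 0 < z.im) : (z⁻¹ - Complex.log z).im < 0 := by
  have h0 : z ≠ 0 := fun h => by simp [h] at hz
  have h1 : (z⁻¹).im < 0 := by
    rw [Complex.inv_im]
    exact div_neg_of_neg_of_pos (neg_neg_of_pos hz) (Complex.normSq_pos.2 h0)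
  have h2 : 0 ≤ (Complex.log z).im := by
    rw [Complex.log_im]; exact Complex.arg_nonneg_iff.2 hz.le
  rw [Complex.sub_im]; linarith

lemma w_ne {z : ℂ} (hz : 0 < z.im) : z⁻¹ - Complex.log z ≠ 0 :=
  fun h => by simpa [h] using w_im_neg hz

lemma denom_factor {z : ℂ} (h0 : z ≠ 0) :
    1 - z * Complex.log z = z * (z⁻¹ - Complex.log z) := by
  field_simp

lemma denom_ne {z : ℂ} (hz : 0 < z.im) : 1 - z * Complex.log z ≠ 0 := by
  have h0 : z ≠ 0 := fun h => by simp [h] at hz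
  rw [denom_factor h0]
  exact mul_ne_zero h0 (w_ne hz)

lemma f_eq {z : ℂ} (hz : 0 < z.im) :
    z / (1 - z * Complex.log z) = (z⁻¹ - Complex.log z)⁻¹ := by
  have h0 : z ≠ 0 := fun h => by simp [h] at hz
  rw [denom_factor h0, div_mul_cancel_left₀ h0]

lemma f_im_nonneg {z : ℂ} (hz : 0 < z.im) :
    0 ≤ (z / (1 - z * Complex.log z)).im := by
  rw [f_eq hz, Complex.inv_im]
  exact div_nonneg (by linarith [w_im_neg hz]) (Complex.normSq_nonneg _)

lemma tendsto_mul_log :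
    Tendsto (fun z : ℂ => z * Complex.log z) (nhdsWithin 0 {(0:ℂ)}ᶜ) (nhds 0) := by
  have hb : ∀ᶠ z : ℂ in nhdsWithin 0 {(0:ℂ)}ᶜ, ‖z * Complex.log z‖ ≤
      |‖z‖ * Real.log (‖z‖)| + Real.pi * ‖z‖ := by
    filter_upwards [self_mem_nhdsWithin] with z hz
    have hlog : ‖Complex.log z‖ ≤ |Real.log (‖z‖)| + Real.pi := by
      calc ‖Complex.log z‖ ≤ |(Complex.log z).re| + |(Complex.log z).im| :=
            Complex.norm_le_abs_re_add_abs_im _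
        _ ≤ |Real.log (‖z‖)| + Real.pi := by
            rw [Complex.log_re, Complex.log_im]
            gcongr
            exact Complex.abs_arg_le_pi z
    have : ‖z * Complex.log z‖ = ‖z‖ * ‖Complex.log z‖ := by
      simp
    rw [this]
    calc ‖z‖ * ‖Complex.log z‖
        ≤ ‖z‖ * (|Real.log (‖z‖)| + Real.pi) := by
          gcongr
      _ = |‖z‖ * Real.log (‖z‖)| + Real.pi * ‖z‖ := by
          rw [mul_add, abs_mul, _root_.abs_of_nonneg (norm_nonneg z)]; ring
  refine squeeze_zero_norm' hb ?_
  have hcont : Continuous fun t : ℝ => |t * Real.log t| + Real.pi * t :=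
    (Real.continuous_mul_log.abs).add (continuous_const.mul continuous_id)
  have := (hcont.comp (continuous_norm : Continuous fun z : ℂ => ‖z‖)).tendsto 0
  simp only [Function.comp_def, map_zero, norm_zero, Real.log_zero, mul_zero, abs_zero, add_zero,
    zero_mul] at this
  exact this.mono_left nhdsWithin_le_nhds

lemma region_im {K : ℝ} {z : ℂ} (h : z ∈ ntRegion 0 K) : 0 < z.im := h.1

lemma region_ne {K : ℝ} {z : ℂ} (h : z ∈ ntRegion 0 K) : z ≠ 0 :=
  fun h0 => by simp [h0] at h; exact lt_irrefl _ h.1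

lemma region_neBot : (nhdsWithin (0:ℂ) (ntRegion 0 1)).NeBot := by
  rw [← mem_closure_iff_nhdsWithin_neBot]
  have ht : Tendsto (fun n : ℕ => (Complex.I * ((1:ℝ)/(n+1) : ℝ))) atTop (nhds 0) := by
    have h1 : Tendsto (fun n : ℕ => ((1:ℝ)/(n+1))) atTop (nhds 0) :=
      tendsto_one_div_add_atTop_nhds_zero_nat
    have h2 : Tendsto (fun t : ℝ => (Complex.I * (t:ℂ))) (nhds 0) (nhds 0) := by
      have : Continuous (fun t : ℝ => (Complex.I * (t:ℂ))) :=
        continuous_const.mul Complex.continuous_ofReal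
      simpa using this.tendsto (0:ℝ)
    exact h2.comp h1
  refine mem_closure_of_tendsto ht (Eventually.of_forall fun n => ?_)
  have hp : (0:ℝ) < (1:ℝ)/(n+1) := by positivity
  constructor
  · simp only [Complex.mul_im, Complex.I_re, Complex.ofReal_im, Complex.I_im,
      Complex.ofReal_re, zero_mul, one_mul, zero_add]
    exact hp
  · simp only [Complex.ofReal_zero, sub_zero, norm_mul, Complex.norm_I, one_mul,
      Complex.norm_real, Real.norm_eq_abs, Complex.mul_im, Complex.I_re, Complex.I_im, Complex.ofReal_re,
      Complex.ofReal_im, zero_mul, one_mul, mul_zero, add_zero, zero_add]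
    rw [_root_.abs_of_nonneg hp.le]

/-- For every aperture `K`, `z ↦ z log z` tends to `0` nontangentially. -/
lemma tendsto_mul_log_region (K : ℝ) :
    Tendsto (fun z : ℂ => z * Complex.log z) (nhdsWithin 0 (ntRegion 0 K)) (nhds 0) :=
  tendsto_mul_log.mono_left (nhdsWithin_mono _ (fun _ hz => region_ne hz))

lemma tendsto_denom (K : ℝ) :
    Tendsto (fun z : ℂ => 1 - z * Complex.log z) (nhdsWithin 0 (ntRegion 0 K)) (nhds 1) := by
  simpa using tendsto_const_nhds.sub (tendsto_mul_log_region K)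

/-- The key order-1 statement. -/
lemma key2 (K : ℝ) :
    Tendsto (fun z : ℂ => (z / (1 - z * Complex.log z) - z) / z)
      (nhdsWithin 0 (ntRegion 0 K)) (nhds 0) := by
  have h := (tendsto_mul_log_region K).div (tendsto_denom K) one_ne_zero
  rw [zero_div] at h
  refine h.congr' ?_
  filter_upwards [self_mem_nhdsWithin] with z hz
  have h0 := region_ne hz
  have hD := denom_ne (region_im hz)
  rw [Pi.div_apply]
  field_simp
  ring

end PickAux

open PickAux in
theorem example_one_over_one_minus_z_log_z :
    IsPick (fun z : ℂ => z / (1 - z * Complex.log z)) ∧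
    HasPseudoTaylor (fun z : ℂ => z / (1 - z * Complex.log z)) 0 1
      (fun j => if j = 1 then 1 else 0) ∧
    ¬ ∃ c : ℕ → ℂ, HasPseudoTaylor (fun z : ℂ => z / (1 - z * Complex.log z)) 0 2 c := by
  refine ⟨⟨?_, ?_⟩, ?_, ?_⟩
  · -- differentiable
    intro z hz
    have him : 0 < z.im := hz
    refine DifferentiableAt.differentiableWithinAt ?_
    exact differentiableAt_id.div
      ((differentiableAt_const _).sub
        (differentiableAt_id.mul (Complex.differentiableAt_log
          (Complex.mem_slitPlane_iff.2 (Or.inr him.ne')))))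
      (denom_ne him)
  · -- imaginary part
    intro z hz
    exact f_im_nonneg hz
  · -- pseudo-Taylor of order 1
    intro K hK
    have h := key2 K
    refine Tendsto.congr' ?_ h
    filter_upwards with z
    simp [Finset.sum_range_succ]
  · -- no pseudo-Taylor of order 2
    rintro ⟨c, hc⟩
    haveI := region_neBot
    have hev : ∀ᶠ z : ℂ in nhdsWithin 0 (ntRegion 0 1), z ∈ ntRegion 0 1 :=
      self_mem_nhdsWithin
    have T0 : Tendsto (fun z : ℂ => z) (nhdsWithin 0 (ntRegion 0 1)) (nhds 0) :=
      tendsto_id.mono_right nhdsWithin_le_nhds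
    have h2 : Tendsto
        (fun z : ℂ => (z / (1 - z * Complex.log z) - (c 0 + c 1 * z + c 2 * z ^ 2)) / z ^ 2)
        (nhdsWithin 0 (ntRegion 0 1)) (nhds 0) := by
      have := hc 1 one_pos
      simp only [Complex.ofReal_zero, sub_zero] at this
      refine this.congr' ?_
      filter_upwards with z
      congr 1
      simp [Finset.sum_range_succ]
    -- divide by z instead of z^2
    have h1 : Tendsto
        (fun z : ℂ => (z / (1 - z * Complex.log z) - (c 0 + c 1 * z + c 2 * z ^ 2)) / z)
        (nhdsWithin 0 (ntRegion 0 1)) (nhds 0) := by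
      have hm := h2.mul T0
      rw [mul_zero] at hm
      refine hm.congr' ?_
      filter_upwards [hev] with z hz
      have h0 := region_ne hz
      field_simp
    -- the difference of the two order-1 statements
    have h3 : Tendsto (fun z : ℂ => ((c 0 + c 1 * z + c 2 * z ^ 2) - z) / z)
        (nhdsWithin 0 (ntRegion 0 1)) (nhds 0) := by
      have hs := (key2 1).sub h1
      rw [sub_zero] at hs
      refine hs.congr' ?_
      filter_upwards with z
      rw [div_sub_div_same]
      ring_nf
    -- c 0 = 0
    have hc0 : c 0 = 0 := by
      have hA : Tendsto (fun z : ℂ => (c 0 + c 1 * z + c 2 * z ^ 2) - z)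
          (nhdsWithin 0 (ntRegion 0 1)) (nhds 0) := by
        have hm := h3.mul T0
        rw [mul_zero] at hm
        refine hm.congr' ?_
        filter_upwards [hev] with z hz
        have h0 := region_ne hz
        field_simp
      have hB : Tendsto (fun z : ℂ => (c 0 + c 1 * z + c 2 * z ^ 2) - z)
          (nhdsWithin 0 (ntRegion 0 1)) (nhds (c 0)) := by
        have hcont : Continuous (fun z : ℂ => (c 0 + c 1 * z + c 2 * z ^ 2) - z) := by
          continuity
        have := (hcont.tendsto 0).mono_left (nhdsWithin_le_nhds (s := ntRegion 0 1))
        simpa using this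
      exact (tendsto_nhds_unique hB hA)
    -- c 1 = 1
    have hc1 : c 1 = 1 := by
      have hA : Tendsto (fun z : ℂ => (c 1 - 1) + c 2 * z)
          (nhdsWithin 0 (ntRegion 0 1)) (nhds 0) := by
        refine h3.congr' ?_
        filter_upwards [hev] with z hz
        have h0 := region_ne hz
        rw [hc0]
        field_simp
        ring
      have hB : Tendsto (fun z : ℂ => (c 1 - 1) + c 2 * z)
          (nhdsWithin 0 (ntRegion 0 1)) (nhds (c 1 - 1)) := by
        have hcont : Continuous (fun z : ℂ => (c 1 - 1) + c 2 * z) := by continuity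
        have := (hcont.tendsto 0).mono_left (nhdsWithin_le_nhds (s := ntRegion 0 1))
        simpa using this
      have := tendsto_nhds_unique hB hA
      linear_combination this
    -- now derive that log tends to c 2
    have h6 : Tendsto (fun z : ℂ => Complex.log z / (1 - z * Complex.log z))
        (nhdsWithin 0 (ntRegion 0 1)) (nhds (c 2)) := by
      have hm := h2.add (tendsto_const_nhds (x := c 2))
      rw [zero_add] at hm
      refine hm.congr' ?_
      filter_upwards [hev] with z hz
      have h0 := region_ne hz
      have hD := denom_ne (region_im hz)
      rw [hc0, hc1]
      field_simp
      ring
    have h7 : Tendsto Complex.log (nhdsWithin 0 (ntRegion 0 1)) (nhds (c 2)) := by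
      have hm := h6.mul (tendsto_denom 1)
      rw [mul_one] at hm
      refine hm.congr' ?_
      filter_upwards [hev] with z hz
      exact div_mul_cancel₀ _ (denom_ne (region_im hz))
    have h8 : Tendsto (fun z : ℂ => Real.log (‖z‖))
        (nhdsWithin 0 (ntRegion 0 1)) (nhds (c 2).re) := by
      have := (Complex.continuous_re.tendsto (c 2)).comp h7
      refine this.congr ?_
      intro z
      simp [Function.comp, Complex.log_re]
    have h9 : Tendsto (fun z : ℂ => ‖z‖)
        (nhdsWithin 0 (ntRegion 0 1)) (nhdsWithin 0 (Set.Ioi 0)) := by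
      rw [tendsto_nhdsWithin_iff]
      constructor
      · have := (continuous_norm.tendsto 0).comp T0
        simpa [Function.comp_def] using this
      · filter_upwards [hev] with z hz
        exact norm_pos_iff.mpr (region_ne hz)
    have h10 : Tendsto (fun z : ℂ => Real.log (‖z‖))
        (nhdsWithin 0 (ntRegion 0 1)) atBot :=
      Real.tendsto_log_nhdsGT_zero.comp h9
    exact not_tendsto_nhds_of_tendsto_atBot h10 _ h8
end
end

section
/- For an integer ν ≥ 4, the function f_ν(z) = -Σ_{k=1}^∞ 1/(k^ν z + k^{ν-1}) defines an analytic function on the upper half-plane belonging to the Pick class (the series converging locally uniformly on Π). -/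
open Complex Filter Finset Metric Set

noncomputable section

private lemma denom_im (ν k : ℕ) (z : ℂ) :
    (((k : ℂ) + 1) ^ ν * z + ((k : ℂ) + 1) ^ (ν - 1)).im = ((k:ℝ)+1)^ν * z.im := by
  have h1 : ((k : ℂ) + 1) ^ ν = (((k+1)^ν : ℕ) : ℂ) := by push_cast; ring
  have h2 : ((k : ℂ) + 1) ^ (ν-1) = (((k+1)^(ν-1) : ℕ) : ℂ) := by push_cast; ring
  rw [Complex.add_im, Complex.mul_im, h1, h2, Complex.natCast_im, Complex.natCast_im,
    Complex.natCast_re]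
  push_cast
  ring

private lemma denom_ne (ν k : ℕ) {z : ℂ} (hz : 0 < z.im) :
    ((k:ℂ)+1)^ν * z + ((k:ℂ)+1)^(ν-1) ≠ 0 := by
  intro h
  have him := denom_im ν k z
  rw [h] at him
  simp only [Complex.zero_im] at him
  have ha : (0:ℝ) < ((k:ℝ)+1)^ν := by positivity
  nlinarith

private lemma norm_term_le (ν k : ℕ) {z : ℂ} {ε : ℝ} (hε : 0 < ε) (hz : ε ≤ z.im) :
    ‖1 / (((k:ℂ)+1)^ν * z + ((k:ℂ)+1)^(ν-1))‖ ≤ 1/ε * (1/((k:ℝ)+1)^ν) := by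
  have hzim : 0 < z.im := lt_of_lt_of_le hε hz
  have ha : (0:ℝ) < ((k:ℝ)+1)^ν := by positivity
  set w := ((k:ℂ)+1)^ν * z + ((k:ℂ)+1)^(ν-1) with hw
  have hbound : ((k:ℝ)+1)^ν * ε ≤ ‖w‖ := by
    calc ((k:ℝ)+1)^ν * ε ≤ ((k:ℝ)+1)^ν * z.im := by nlinarith
    _ = |w.im| := by rw [hw, denom_im, abs_of_pos (by positivity)]
    _ ≤ ‖w‖ := Complex.abs_im_le_norm w
    _ = ‖w‖ := rfl
  rw [norm_div, norm_one]
  have h1 : (0:ℝ) < ((k:ℝ)+1)^ν * ε := by positivity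
  calc 1 / ‖w‖ ≤ 1 / (((k:ℝ)+1)^ν * ε) := one_div_le_one_div_of_le h1 hbound
  _ = 1/ε * (1/((k:ℝ)+1)^ν) := by field_simp

private lemma summable_aux (p : ℕ) (hp : 2 ≤ p) :
    Summable (fun k : ℕ => 1 / ((k:ℝ)+1)^p) := by
  have := Real.summable_one_div_nat_pow.mpr (by omega : 1 < p)
  exact ((summable_nat_add_iff 1).mpr this).congr (fun k => by push_cast; ring)

theorem example_fnu_is_Pick (ν : ℕ) (hν : 4 ≤ ν) :
    IsPick (fun z : ℂ => -∑' k : ℕ, 1 / (((k : ℂ) + 1) ^ ν * z + ((k : ℂ) + 1) ^ (ν - 1))) ∧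
    TendstoLocallyUniformlyOn
      (fun N : ℕ => fun z : ℂ =>
        -∑ k ∈ Finset.range N, 1 / (((k : ℂ) + 1) ^ ν * z + ((k : ℂ) + 1) ^ (ν - 1)))
      (fun z : ℂ => -∑' k : ℕ, 1 / (((k : ℂ) + 1) ^ ν * z + ((k : ℂ) + 1) ^ (ν - 1)))
      atTop UHP := by
  set g : ℕ → ℂ → ℂ := fun k z => 1 / (((k : ℂ) + 1) ^ ν * z + ((k : ℂ) + 1) ^ (ν - 1)) with hg
  have hopen : IsOpen UHP := by
    have : UHP = Complex.im ⁻¹' Set.Ioi 0 := rfl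
    rw [this]; exact isOpen_Ioi.preimage Complex.continuous_im
  -- locally uniform convergence
  have htlu : TendstoLocallyUniformlyOn
      (fun N z => -∑ k ∈ Finset.range N, g k z) (fun z => -∑' k, g k z) atTop UHP := by
    rw [tendstoLocallyUniformlyOn_iff_forall_isCompact hopen]
    intro K hK hKc
    rcases K.eq_empty_or_nonempty with rfl | hne
    · simp [tendstoUniformlyOn_iff_tendstoUniformlyOnFilter, TendstoUniformlyOnFilter]
    · obtain ⟨z₀, hz₀K, hz₀⟩ := hKc.exists_isMinOn hne Complex.continuous_im.continuousOn
      have hε : 0 < z₀.im := hK hz₀K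
      have hu : Summable (fun k : ℕ => 1/z₀.im * (1/((k:ℝ)+1)^ν)) :=
        (summable_aux ν (by omega)).mul_left _
      have := tendstoUniformlyOn_tsum_nat (f := fun k z => -g k z) hu
        (fun k z hzK => by
          rw [norm_neg]
          exact norm_term_le ν k hε (hz₀ hzK))
      simpa [Finset.sum_neg_distrib, tsum_neg] using this
  refine ⟨⟨?_, ?_⟩, htlu⟩
  · -- differentiability
    refine htlu.differentiableOn (Filter.Eventually.of_forall fun N => ?_) hopen
    refine DifferentiableOn.neg ?_
    refine DifferentiableOn.fun_sum fun k _ => ?_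
    refine DifferentiableOn.div (differentiableOn_const _) ?_ ?_
    · exact ((differentiableOn_const _).mul differentiableOn_id).add (differentiableOn_const _)
    · exact fun z hz => denom_ne ν k hz
  · -- nonneg imaginary part
    intro z hz
    have hzim : 0 < z.im := hz
    have hsum : Summable (fun k => g k z) := by
      refine Summable.of_norm (Summable.of_nonneg_of_le (fun k => norm_nonneg _)
        (fun k => norm_term_le ν k hzim le_rfl) ?_)
      exact (summable_aux ν (by omega)).mul_left _
    simp only [Complex.neg_im, neg_nonneg]
    rw [Complex.im_tsum hsum]
    refine tsum_nonpos fun k => ?_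
    have ha : (0:ℝ) < ((k:ℝ)+1)^ν := by positivity
    rw [hg]
    simp only [one_div, Complex.inv_im, denom_im]
    apply div_nonpos_of_nonpos_of_nonneg
    · nlinarith
    · exact Complex.normSq_nonneg _
end
end

section
/- For an integer ν ≥ 4 and f_ν(z) = -Σ_{k=1}^∞ 1/(k^ν z + k^{ν-1}) on the upper half-plane, for each j = 0,1,...,ν-3 the radial limit lim_{y→0+} f_ν^{(j)}(iy)/j! exists and equals (-1)^{j+1} ζ(ν - j - 1), where ζ is the Riemann zeta function. -/
open Complex Filter Finset Metric Set

noncomputable section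

namespace FnuAux

def DD (ν k : ℕ) : ℂ := ((k:ℂ)+1)^ν
def EE (ν k : ℕ) : ℂ := ((k:ℂ)+1)^(ν-1)
def GG (ν m k : ℕ) (z : ℂ) : ℂ := DD ν k ^ m / (DD ν k * z + EE ν k)^(m+1)
def FF (ν m : ℕ) (z : ℂ) : ℂ := ∑' k, GG ν m k z

lemma DD_eq (ν k : ℕ) : DD ν k = ((((k:ℝ)+1)^ν : ℝ) : ℂ) := by
  simp [DD]

lemma EE_eq (ν k : ℕ) : EE ν k = ((((k:ℝ)+1)^(ν-1) : ℝ) : ℂ) := by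
  simp [EE]

lemma im_aux (r s : ℝ) (z : ℂ) : ((r:ℂ)*z + (s:ℂ)).im = r * z.im := by
  simp

lemma denom_im (ν k : ℕ) (z : ℂ) : (DD ν k * z + EE ν k).im = ((k:ℝ)+1)^ν * z.im := by
  rw [DD_eq, EE_eq, im_aux]

lemma denom_ne (ν k : ℕ) {z : ℂ} (hz : 0 < z.im) : DD ν k * z + EE ν k ≠ 0 := by
  intro h
  have h2 : ((k:ℝ)+1)^ν * z.im = 0 := by rw [← denom_im ν k z, h]; simp
  have ha : (0:ℝ) < ((k:ℝ)+1)^ν := by positivity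
  nlinarith

lemma denom_abs_ge (ν k : ℕ) {z : ℂ} {ε : ℝ} (hε : 0 < ε) (hz : ε ≤ z.im) :
    ((k:ℝ)+1)^ν * ε ≤ ‖DD ν k * z + EE ν k‖ := by
  have h1 : |(DD ν k * z + EE ν k).im| ≤ ‖DD ν k * z + EE ν k‖ :=
    Complex.abs_im_le_norm _
  rw [denom_im] at h1
  have ha : (0:ℝ) < ((k:ℝ)+1)^ν := by positivity
  calc ((k:ℝ)+1)^ν * ε ≤ ((k:ℝ)+1)^ν * z.im := by nlinarith
    _ ≤ |((k:ℝ)+1)^ν * z.im| := le_abs_self _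
    _ ≤ _ := h1

lemma norm_GG_le (ν m k : ℕ) (hν : 2 ≤ ν) {z : ℂ} {ε : ℝ} (hε : 0 < ε) (hz : ε ≤ z.im) :
    ‖GG ν m k z‖ ≤ (1/ε^(m+1)) * (1/((k:ℝ)+1)^2) := by
  set a : ℝ := (k:ℝ)+1 with ha_def
  have ha1 : (1:ℝ) ≤ a := by simp [ha_def]
  have ha0 : (0:ℝ) < a := by linarith
  have habsD : ‖DD ν k‖ = a^ν := by
    rw [DD_eq, Complex.norm_real, Real.norm_eq_abs]
    exact abs_of_nonneg (by positivity)
  have hden : a^ν * ε ≤ ‖DD ν k * z + EE ν k‖ := denom_abs_ge ν k hε hz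
  rw [GG, norm_div, norm_pow, norm_pow]
  simp only [habsD]
  clear_value a
  have hdenpos : (0:ℝ) < a^ν * ε := by positivity
  calc (a^ν)^m / ‖DD ν k * z + EE ν k‖ ^ (m+1)
      ≤ (a^ν)^m / (a^ν * ε)^(m+1) := by
        apply div_le_div_of_nonneg_left (by positivity) (by positivity)
        exact pow_le_pow_left₀ hdenpos.le hden (m+1)
    _ = 1/(a^ν * ε^(m+1)) := by
        have h : (a^ν*ε)^(m+1) = (a^ν)^m * (a^ν * ε^(m+1)) := by
          rw [mul_pow, pow_succ]; ring
        rw [h, div_mul_eq_div_div, div_self (by positivity)]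
    _ ≤ 1/(a^2 * ε^(m+1)) := by
        apply one_div_le_one_div_of_le (by positivity)
        have : a^2 ≤ a^ν := pow_le_pow_right₀ ha1 hν
        nlinarith [pow_pos hε (m+1)]
    _ = (1/ε^(m+1)) * (1/a^2) := by ring

lemma summable_bound : Summable (fun k : ℕ => 1/((k:ℝ)+1)^2) := by
  have h : Summable (fun n : ℕ => 1/(n:ℝ)^2) := by
    rw [Real.summable_one_div_nat_pow]
    norm_num
  have := (summable_nat_add_iff 1).2 h
  refine this.congr fun n => ?_
  push_cast
  ring

lemma hasDerivAt_GG (ν m k : ℕ) {z : ℂ} (hz : DD ν k * z + EE ν k ≠ 0) :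
    HasDerivAt (GG ν m k) (-((m:ℂ)+1) * GG ν (m+1) k z) z := by
  have hden : HasDerivAt (fun w : ℂ => DD ν k * w + EE ν k) (DD ν k) z := by
    simpa using ((hasDerivAt_id z).const_mul (DD ν k)).add_const (EE ν k)
  have hpow : HasDerivAt (fun w : ℂ => (DD ν k * w + EE ν k)^(m+1))
      ((m+1) * (DD ν k * z + EE ν k)^m * DD ν k) z := by
    simpa using hden.fun_pow (m+1)
  have h := (hasDerivAt_const z (DD ν k ^ m)).fun_div hpow (pow_ne_zero _ hz)
  refine h.congr_deriv ?_
  rw [GG]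
  field_simp
  ring

lemma hasDerivAt_FF (ν : ℕ) (hν : 2 ≤ ν) (m : ℕ) {z : ℂ} (hz : 0 < z.im) :
    HasDerivAt (FF ν m) (-((m:ℂ)+1) * FF ν (m+1) z) z := by
  set ε := z.im / 2 with hε_def
  have hε : 0 < ε := by simp [hε_def]; linarith
  have key : HasDerivAt (fun w => ∑' k, GG ν m k w) (∑' k, -((m:ℂ)+1) * GG ν (m+1) k z) z := by
    apply hasDerivAt_tsum_of_isPreconnected
      (u := fun k : ℕ => (((m:ℝ)+1) * (1/ε^(m+2))) * (1/((k:ℝ)+1)^2))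
      (summable_bound.mul_left _)
      (isOpen_lt continuous_const Complex.continuous_im)
      (convex_halfSpace_im_gt ε).isPreconnected
      (fun k w hw => hasDerivAt_GG ν m k (denom_ne ν k (lt_trans hε hw)))
      (fun k w hw => ?_) (?_ : z ∈ {w : ℂ | ε < w.im}) ?_
      (?_ : z ∈ {w : ℂ | ε < w.im})
    · show ε < z.im
      rw [hε_def]; linarith
    · apply Summable.of_norm_bounded (summable_bound.mul_left (1/ε^(m+1)))
      exact fun k => norm_GG_le ν m k hν hε (by rw [hε_def]; linarith)
    · show ε < z.im
      rw [hε_def]; linarith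
    · rw [norm_mul]
      have h1 : ‖-((m:ℂ)+1)‖ = (m:ℝ)+1 := by
        rw [norm_neg]
        norm_cast
      rw [h1]
      refine le_trans (mul_le_mul_of_nonneg_left
        (norm_GG_le ν (m+1) k hν hε (le_of_lt hw)) (by positivity)) (le_of_eq ?_)
      ring
  have : (∑' k, -((m:ℂ)+1) * GG ν (m+1) k z) = -((m:ℂ)+1) * FF ν (m+1) z := tsum_mul_left
  rw [this] at key
  exact key

def ff (ν : ℕ) (z : ℂ) : ℂ := -∑' k : ℕ, 1 / (((k : ℂ) + 1) ^ ν * z + ((k : ℂ) + 1) ^ (ν - 1))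

lemma UHP_open : IsOpen {z : ℂ | 0 < z.im} := isOpen_lt continuous_const Complex.continuous_im

lemma ff_eq (ν : ℕ) (z : ℂ) : ff ν z = -FF ν 0 z := by
  rw [ff, FF]
  congr 1
  apply tsum_congr
  intro k
  rw [GG, DD, EE, pow_zero, pow_one]

lemma iteratedDeriv_ff (ν : ℕ) (hν : 2 ≤ ν) (m : ℕ) :
    ∀ z ∈ {z : ℂ | 0 < z.im},
      iteratedDeriv m (ff ν) z = (-1)^(m+1) * (Nat.factorial m) * FF ν m z := by
  induction m with
  | zero =>
    intro z hz
    simp [iteratedDeriv_zero, ff_eq]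
  | succ m ih =>
    intro z hz
    rw [iteratedDeriv_succ]
    have hev : iteratedDeriv m (ff ν) =ᶠ[nhds z]
        (fun w => (-1)^(m+1) * (Nat.factorial m) * FF ν m w) := by
      filter_upwards [UHP_open.mem_nhds hz] with w hw using ih w hw
    rw [hev.deriv_eq]
    have hd : HasDerivAt (fun w => (-1:ℂ)^(m+1) * (Nat.factorial m) * FF ν m w)
        ((-1)^(m+1) * (Nat.factorial m) * (-((m:ℂ)+1) * FF ν (m+1) z)) z :=
      (hasDerivAt_FF ν hν m hz).const_mul _
    rw [hd.deriv]
    rw [Nat.factorial_succ]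
    push_cast
    ring

lemma re_aux (r s y : ℝ) : ((r:ℂ)*((y:ℂ)*Complex.I) + (s:ℂ)).re = s := by simp

lemma kc_ne (k : ℕ) : ((k:ℂ)+1) ≠ 0 := by
  have : ((k:ℂ)+1) = ((k+1 : ℕ) : ℂ) := by push_cast; ring
  rw [this]
  exact_mod_cast Nat.succ_ne_zero k

lemma exp_identity (j b : ℕ) : (j+b)*(j+1) = (j+b+1)*j + b := by ring

lemma EE_pow (j b k : ℕ) :
    EE (j+b+1) k ^ (j+1) = DD (j+b+1) k ^ j * ((k:ℂ)+1)^b := by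
  rw [EE, DD]
  have h : j + b + 1 - 1 = j + b := by omega
  rw [h, ← pow_mul, ← pow_mul, ← pow_add, exp_identity]

lemma norm_GG_on_axis (j b k : ℕ) (hb : 2 ≤ b) (y : ℝ) :
    ‖GG (j+b+1) j k ((y:ℂ)*Complex.I)‖ ≤ 1/((k:ℝ)+1)^2 := by
  set ν := j + b + 1 with hν_def
  set a : ℝ := (k:ℝ)+1 with ha_def
  have ha1 : (1:ℝ) ≤ a := by simp [ha_def]
  have ha0 : (0:ℝ) < a := by linarith
  have hre : (DD ν k * ((y:ℂ)*Complex.I) + EE ν k).re = a^(ν-1) := by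
    rw [DD_eq, EE_eq, re_aux]
  have habs : a^(ν-1) ≤ ‖DD ν k * ((y:ℂ)*Complex.I) + EE ν k‖ := by
    calc a^(ν-1) = |a^(ν-1)| := (_root_.abs_of_nonneg (by positivity)).symm
      _ = |(DD ν k * ((y:ℂ)*Complex.I) + EE ν k).re| := by rw [hre]
      _ ≤ _ := Complex.abs_re_le_norm _
  have habsD : ‖DD ν k‖ = a^ν := by
    rw [DD_eq, Complex.norm_real, Real.norm_eq_abs]
    exact abs_of_nonneg (by positivity)
  rw [GG, norm_div, norm_pow, norm_pow]
  simp only [habsD]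
  have hpow : (a^(ν-1))^(j+1) = (a^ν)^j * a^b := by
    have h : ν - 1 = j + b := by omega
    rw [h, hν_def, ← pow_mul, ← pow_mul, ← pow_add, exp_identity]
  have hd0 : (0:ℝ) < a^(ν-1) := by positivity
  calc (a^ν)^j / ‖DD ν k * ((y:ℂ)*Complex.I) + EE ν k‖ ^ (j+1)
      ≤ (a^ν)^j / (a^(ν-1))^(j+1) := by
        apply div_le_div_of_nonneg_left (by positivity) (by positivity)
        exact pow_le_pow_left₀ hd0.le habs (j+1)
    _ = 1/a^b := by
        rw [hpow, div_mul_eq_div_div, div_self (by positivity)]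
    _ ≤ 1/a^2 := by
        apply one_div_le_one_div_of_le (by positivity)
        exact pow_le_pow_right₀ ha1 hb

lemma GG_tendsto (j b k : ℕ) :
    Tendsto (fun y : ℝ => GG (j+b+1) j k ((y:ℂ)*Complex.I)) (nhdsWithin 0 (Set.Ioi 0))
      (nhds (1/((k:ℂ)+1)^b)) := by
  set ν := j + b + 1 with hν_def
  have hEne : EE ν k ≠ 0 := by
    rw [EE]; exact pow_ne_zero _ (kc_ne k)
  have t0 : Tendsto (fun y : ℝ => ((y:ℂ))) (nhdsWithin 0 (Set.Ioi 0)) (nhds 0) := by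
    have := Complex.continuous_ofReal.tendsto 0
    simpa using this.mono_left nhdsWithin_le_nhds
  have t1 : Tendsto (fun y : ℝ => DD ν k * ((y:ℂ)*Complex.I) + EE ν k)
      (nhdsWithin 0 (Set.Ioi 0)) (nhds (EE ν k)) := by
    have := ((t0.mul_const Complex.I).const_mul (DD ν k)).add_const (EE ν k)
    simpa using this
  have t2 : Tendsto (fun y : ℝ => GG ν j k ((y:ℂ)*Complex.I))
      (nhdsWithin 0 (Set.Ioi 0)) (nhds (DD ν k ^ j / EE ν k ^ (j+1))) := by
    exact tendsto_const_nhds.div (t1.pow (j+1)) (pow_ne_zero _ hEne)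
  have hval : DD ν k ^ j / EE ν k ^ (j+1) = 1/((k:ℂ)+1)^b := by
    rw [hν_def, EE_pow j b k, div_mul_eq_div_div, div_self (pow_ne_zero _ ?_)]
    · rw [DD]; exact pow_ne_zero _ (kc_ne k)
  rw [hval] at t2
  exact t2

lemma tendsto_FF (j b : ℕ) (hb : 2 ≤ b) :
    Tendsto (fun y : ℝ => FF (j+b+1) j ((y:ℂ)*Complex.I)) (nhdsWithin 0 (Set.Ioi 0))
      (nhds (riemannZeta ((j+b+1 : ℕ) - (j:ℂ) - 1))) := by
  have hzeta : riemannZeta ((j+b+1 : ℕ) - (j:ℂ) - 1) = ∑' k : ℕ, 1/((k:ℂ)+1)^b := by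
    have harg : ((j+b+1 : ℕ) : ℂ) - (j:ℂ) - 1 = (b : ℂ) := by push_cast; ring
    rw [harg, zeta_eq_tsum_one_div_nat_add_one_cpow (by
      rw [Complex.natCast_re]
      exact_mod_cast lt_of_lt_of_le one_lt_two hb)]
    apply tsum_congr
    intro n
    rw [Complex.cpow_natCast]
  rw [hzeta]
  exact tendsto_tsum_of_dominated_convergence summable_bound
    (fun k => GG_tendsto j b k)
    (Eventually.of_forall fun y => fun k => norm_GG_on_axis j b k hb y)

end FnuAux

theorem example_fnu_radial_derivatives (ν : ℕ) (hν : 4 ≤ ν) :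
    ∀ j ≤ ν - 3,
      Tendsto
        (fun y : ℝ =>
          iteratedDeriv j
            (fun z : ℂ => -∑' k : ℕ, 1 / (((k : ℂ) + 1) ^ ν * z + ((k : ℂ) + 1) ^ (ν - 1)))
            ((y : ℂ) * Complex.I) / (Nat.factorial j))
        (nhdsWithin 0 (Set.Ioi 0))
        (nhds ((-1) ^ (j + 1) * riemannZeta ((ν : ℂ) - j - 1))) := by
  intro j hj
  obtain ⟨b, hb2, hνjb⟩ : ∃ b, 2 ≤ b ∧ ν = j + b + 1 := ⟨ν - j - 1, by omega, by omega⟩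
  subst hνjb
  have hν2 : 2 ≤ j + b + 1 := by omega
  have hfact : ((Nat.factorial j : ℂ)) ≠ 0 := by
    exact_mod_cast (Nat.factorial_pos j).ne'
  have key := (FnuAux.tendsto_FF j b hb2).const_mul ((-1:ℂ)^(j+1))
  refine Tendsto.congr' ?_ key
  filter_upwards [self_mem_nhdsWithin] with y hy
  have hy' : ((y:ℂ) * Complex.I) ∈ {z : ℂ | 0 < z.im} := by
    simp only [Set.mem_setOf_eq, Complex.mul_im, Complex.ofReal_re, Complex.I_im,
      Complex.ofReal_im, Complex.I_re]
    simpa using hy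
  have hiter := FnuAux.iteratedDeriv_ff (j+b+1) hν2 j _ hy'
  show (-1:ℂ)^(j+1) * FnuAux.FF (j+b+1) j ((y:ℂ)*Complex.I)
      = iteratedDeriv j (FnuAux.ff (j+b+1)) ((y:ℂ)*Complex.I) / (Nat.factorial j)
  rw [hiter]
  field_simp
end
end

section
/- The function f(z) = -(1/e) Σ_{k=1}^∞ 1/(k! (z + 1/k)) belongs to the Pick class and has pseudo-Taylor expansions of all orders about 0, yet f does not extend analytically to any neighborhood of 0. -/
open Complex Filter Finset Metric Set

noncomputable section

/-! ### Auxiliary material -/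

lemma summable_pow_fact (m : ℕ) :
    Summable (fun k : ℕ => ((k : ℝ) + 1) ^ m / (Nat.factorial (k + 1))) := by
  apply summable_of_ratio_norm_eventually_le (r := 1/2) (by norm_num)
  filter_upwards [Filter.eventually_ge_atTop (2 ^ (m + 1))] with k hk
  have hk1 : (0:ℝ) < (k:ℝ) + 1 := by positivity
  have hfac : (0:ℝ) < (Nat.factorial (k+1) : ℝ) := by positivity
  have hkk : (2:ℝ) ^ (m+1) ≤ (k:ℝ) + 1 + 1 := by
    have : ((2:ℝ)) ^ (m+1) ≤ (k:ℝ) := by exact_mod_cast hk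
    linarith
  rw [Real.norm_eq_abs, Real.norm_eq_abs, _root_.abs_of_nonneg (by positivity),
    _root_.abs_of_nonneg (by positivity)]
  push_cast
  have h2 : ((k:ℝ) + 1 + 1) ^ m ≤ 2 ^ m * ((k:ℝ)+1) ^ m := by
    calc ((k:ℝ) + 1 + 1) ^ m ≤ (2 * ((k:ℝ)+1)) ^ m := by
          gcongr; nlinarith [Nat.cast_nonneg (α := ℝ) k]
      _ = 2 ^ m * ((k:ℝ)+1) ^ m := by rw [mul_pow]
  have hcast : ((Nat.factorial (k+1+1) : ℝ)) = ((k:ℝ)+1+1) * (Nat.factorial (k+1) : ℝ) := by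
    rw [Nat.factorial_succ (k+1)]; push_cast; ring
  rw [hcast]
  calc ((k:ℝ) + 1 + 1) ^ m / (((k:ℝ)+1+1) * (Nat.factorial (k+1) : ℝ)) ≤
      (2 ^ m * ((k:ℝ)+1) ^ m) / (2 ^ (m+1) * (Nat.factorial (k+1) : ℝ)) := by
        gcongr
    _ = 1/2 * (((k:ℝ)+1)^m / (Nat.factorial (k+1) : ℝ)) := by
        rw [pow_succ]; field_simp

/-- The terms of the series. -/
abbrev Tm (k : ℕ) (z : ℂ) : ℂ := 1 / ((Nat.factorial (k + 1) : ℂ) * (z + 1 / ((k : ℂ) + 1)))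

lemma hk1ne (k : ℕ) : ((k : ℂ) + 1) ≠ 0 := by
  exact_mod_cast Nat.cast_add_one_ne_zero (R := ℂ) k

lemma facne (k : ℕ) : ((Nat.factorial (k+1) : ℂ)) ≠ 0 := by
  exact_mod_cast Nat.cast_ne_zero.2 (Nat.factorial_ne_zero (k+1))

lemma im_shift (k : ℕ) (z : ℂ) : (z + 1 / ((k : ℂ) + 1)).im = z.im := by
  simp [Complex.add_im, Complex.inv_im, Complex.natCast_im, Complex.one_re]

lemma shift_ne {z : ℂ} (hz : 0 < z.im) (k : ℕ) : z + 1 / ((k : ℂ) + 1) ≠ 0 := by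
  intro h
  have := im_shift k z
  rw [h] at this
  simp at this; linarith

lemma norm_Tm_le {z : ℂ} {δ : ℝ} (hδ : 0 < δ) (hz : δ ≤ z.im) (k : ℕ) :
    ‖Tm k z‖ ≤ (1/δ) * (1 / (Nat.factorial (k+1))) := by
  have habs : δ ≤ ‖z + 1 / ((k : ℂ) + 1)‖ := by
    calc δ ≤ z.im := hz
      _ = (z + 1 / ((k : ℂ) + 1)).im := (im_shift k z).symm
      _ ≤ |(z + 1 / ((k : ℂ) + 1)).im| := le_abs_self _
      _ ≤ ‖z + 1 / ((k : ℂ) + 1)‖ := Complex.abs_im_le_norm _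
  have hfac : (0:ℝ) < (Nat.factorial (k+1) : ℝ) := by positivity
  calc ‖Tm k z‖ = (1/(Nat.factorial (k+1) : ℝ)) * (1/‖z + 1 / ((k : ℂ) + 1)‖) := by
        rw [Tm, norm_div, norm_one, norm_mul, Complex.norm_natCast]
        simp [one_div, mul_inv, mul_comm]
    _ ≤ (1/(Nat.factorial (k+1) : ℝ)) * (1/δ) := by
        gcongr
    _ = (1/δ) * (1 / (Nat.factorial (k+1))) := mul_comm _ _

lemma summable_w : Summable (fun k : ℕ => (1:ℝ) / (Nat.factorial (k+1))) := by
  have := summable_pow_fact 0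
  simp only [pow_zero] at this
  exact this

lemma summable_Tm {z : ℂ} (hz : 0 < z.im) : Summable (fun k => Tm k z) := by
  apply Summable.of_norm_bounded ((summable_w).mul_left (1/z.im))
  exact fun k => norm_Tm_le hz le_rfl k

/-! ### Part 1: Pick class -/

lemma F_diff : DifferentiableOn ℂ (fun z => ∑' k, Tm k z) UHP := by
  intro z₀ hz₀
  have hz₀' : 0 < z₀.im := hz₀
  set δ := z₀.im / 2 with hδdef
  have hδ : 0 < δ := by positivity
  set U : Set ℂ := {z : ℂ | δ < z.im} with hU
  have hUopen : IsOpen U := isOpen_lt continuous_const Complex.continuous_im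
  have hmem : z₀ ∈ U := by simp [hU, hδdef]; linarith
  have hdiff : DifferentiableOn ℂ (fun z => ∑' k, Tm k z) U := by
    apply differentiableOn_tsum_of_summable_norm (u := fun k => (1/δ) * (1/(Nat.factorial (k+1))))
      (summable_w.mul_left (1/δ))
    · intro k
      apply DifferentiableOn.div (differentiableOn_const _)
      · exact DifferentiableOn.mul (differentiableOn_const _)
          ((differentiableOn_id).add (differentiableOn_const _))
      · intro x hx
        exact mul_ne_zero (facne k) (shift_ne (lt_trans hδ hx) k)
    · exact hUopen
    · intro k w hw
      exact norm_Tm_le hδ (le_of_lt hw) k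
  exact (hdiff.differentiableAt (hUopen.mem_nhds hmem)).differentiableWithinAt

lemma Tm_im_nonpos {z : ℂ} (hz : 0 < z.im) (k : ℕ) : (Tm k z).im ≤ 0 := by
  rw [Tm, one_div, Complex.inv_im]
  apply div_nonpos_of_nonpos_of_nonneg
  · rw [neg_nonpos, Complex.mul_im]
    simp only [Complex.natCast_im, Complex.natCast_re, zero_mul, add_zero]
    rw [im_shift]
    positivity
  · exact Complex.normSq_nonneg _

lemma F_im {z : ℂ} (hz : 0 < z.im) : (∑' k, Tm k z).im = ∑' k, (Tm k z).im := by
  exact (Complex.imCLM.map_tsum (summable_Tm hz)).symm ▸ rfl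

lemma f_im_nonneg {z : ℂ} (hz : 0 < z.im) :
    0 ≤ ((-(Real.exp 1 : ℂ)⁻¹ * ∑' k, Tm k z)).im := by
  have h1 : (∑' k, Tm k z).im ≤ 0 := by
    rw [F_im hz]
    exact tsum_nonpos (fun k => Tm_im_nonpos hz k)
  have : (-(Real.exp 1 : ℂ)⁻¹ * ∑' k, Tm k z) = ((-(Real.exp 1)⁻¹ : ℝ) : ℂ) * ∑' k, Tm k z := by
    push_cast; ring
  rw [this, Complex.im_ofReal_mul]
  have h2 : -(Real.exp 1)⁻¹ ≤ 0 := by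
    simp only [neg_nonpos]
    positivity
  nlinarith [mul_nonneg (neg_nonneg.2 h2) (neg_nonneg.2 h1)]

/-! ### Part 2: pseudo-Taylor expansions -/

abbrev bco (k j : ℕ) : ℂ := (-1)^j * ((k:ℂ)+1)^(j+1) / (Nat.factorial (k+1))

lemma summable_pow_factC (m : ℕ) :
    Summable (fun k : ℕ => ((k : ℂ) + 1) ^ m / (Nat.factorial (k + 1))) := by
  have h := (summable_pow_fact m)
  have h2 := Complex.ofRealCLM.summable h
  apply h2.congr
  intro k
  rw [Complex.ofRealCLM_apply]
  push_cast
  ring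

lemma summable_bco_mul (j : ℕ) (w : ℂ) : Summable (fun k => bco k j * w) := by
  apply Summable.mul_right
  simp only [bco, mul_div_assoc]
  exact (summable_pow_factC (j+1)).mul_left _

lemma geom_id (w a : ℂ) (ha : a ≠ 0) (hwa : w + a ≠ 0) (n : ℕ) :
    (w+a)⁻¹ - ∑ j ∈ Finset.range (n+1), (-1)^j * w^j / a^(j+1)
      = (-w/a)^(n+1) * (w+a)⁻¹ := by
  induction n with
  | zero =>
    rw [Finset.range_one, Finset.sum_singleton]
    field_simp
    try ring
    try tauto
    field_simp
  | succ n ih =>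
    rw [Finset.sum_range_succ, ← sub_sub, ih]
    field_simp
    try ring
    try tauto
    simp only [inv_pow, ← pow_add]
    field_simp
    ring

lemma expand_Tm {z : ℂ} (hz : 0 < z.im) (k n : ℕ) :
    Tm k z - ∑ j ∈ Finset.range (n+1), bco k j * z^j
      = ((-z) * ((k:ℂ)+1))^(n+1) * Tm k z := by
  have hc := hk1ne k
  have hF := facne k
  have ha : (1/((k:ℂ)+1) : ℂ) ≠ 0 := one_div_ne_zero hc
  have hwa : z + 1/((k:ℂ)+1) ≠ 0 := shift_ne hz k
  have h := geom_id z (1/((k:ℂ)+1)) ha hwa n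
  have hTm : Tm k z = ((Nat.factorial (k+1):ℂ))⁻¹ * (z + 1/((k:ℂ)+1))⁻¹ := by
    rw [Tm, one_div, mul_inv]
  have hb : ∀ j, bco k j * z^j
      = ((Nat.factorial (k+1):ℂ))⁻¹ * ((-1)^j * z^j / (1/((k:ℂ)+1))^(j+1)) := by
    intro j
    rw [bco]
    field_simp
    try ring
    try tauto
    have hc' : (1 + (k:ℂ)) ≠ 0 := by rw [add_comm]; exact hc
    simp only [inv_pow]
    field_simp
    ring
  calc Tm k z - ∑ j ∈ Finset.range (n+1), bco k j * z^j
      = ((Nat.factorial (k+1):ℂ))⁻¹ *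
        ((z+1/((k:ℂ)+1))⁻¹ - ∑ j ∈ Finset.range (n+1), (-1)^j * z^j/(1/((k:ℂ)+1))^(j+1)) := by
        rw [mul_sub, Finset.mul_sum, hTm]
        congr 1
        exact Finset.sum_congr rfl fun j _ => hb j
    _ = ((Nat.factorial (k+1):ℂ))⁻¹ * ((-z/(1/((k:ℂ)+1)))^(n+1) * (z+1/((k:ℂ)+1))⁻¹) := by
        rw [h]
    _ = ((-z) * ((k:ℂ)+1))^(n+1) * Tm k z := by
        have hd : -z / (1/((k:ℂ)+1)) = -z * ((k:ℂ)+1) := by field_simp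
        rw [hTm, hd]
        ring

lemma key_sum {z : ℂ} (hz : 0 < z.im) (n : ℕ) :
    (∑' k, Tm k z) - ∑ j ∈ Finset.range (n+1), (∑' k, bco k j) * z^j
      = ∑' k : ℕ, ((-z) * ((k:ℂ)+1))^(n+1) * Tm k z := by
  have hsum_b : ∀ j, Summable (fun k => bco k j * z^j) := fun j => summable_bco_mul j _
  have h1 : ∀ j ∈ Finset.range (n+1), (∑' k, bco k j) * z^j = ∑' k, bco k j * z^j :=
    fun j _ => (tsum_mul_right).symm
  have h2 : ∑ j ∈ Finset.range (n+1), ∑' k, bco k j * z^j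
      = ∑' k, ∑ j ∈ Finset.range (n+1), bco k j * z^j :=
    (Summable.tsum_finsetSum (fun j _ => hsum_b j)).symm
  rw [Finset.sum_congr rfl h1, h2,
    ← Summable.tsum_sub (summable_Tm hz) (summable_sum (fun j _ => hsum_b j))]
  exact tsum_congr fun k => expand_Tm hz k n

lemma taylor_limit (n : ℕ) (K : ℝ) (hK : 0 < K) :
    Tendsto (fun z : ℂ => ∑' k : ℕ, (-1:ℂ)^(n+1) * ((k:ℂ)+1)^(n+1) * z * Tm k z)
      (nhdsWithin 0 (ntRegion 0 K)) (nhds 0) := by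
  have hnorm_c : ∀ k : ℕ, ‖((k:ℂ)+1)‖ = (k:ℝ)+1 := by
    intro k
    have : ((k:ℂ)+1) = ((k+1:ℕ):ℂ) := by push_cast; ring
    rw [this, Complex.norm_natCast]
    push_cast; ring
  have hpt : ∀ k : ℕ, Tendsto (fun z : ℂ => (-1:ℂ)^(n+1) * ((k:ℂ)+1)^(n+1) * z * Tm k z)
      (nhdsWithin 0 (ntRegion 0 K)) (nhds 0) := by
    intro k
    have hcont : ContinuousAt (fun z : ℂ => (-1:ℂ)^(n+1) * ((k:ℂ)+1)^(n+1) * z * Tm k z) 0 := by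
      apply ContinuousAt.mul
      · exact (continuousAt_const.mul continuousAt_id)
      · apply ContinuousAt.div continuousAt_const
        · exact continuousAt_const.mul (continuousAt_id.add continuousAt_const)
        · simpa using mul_ne_zero (facne k) (one_div_ne_zero (hk1ne k))
    have h := hcont.tendsto.mono_left (nhdsWithin_le_nhds (s := ntRegion 0 K))
    simpa using h
  have hbd : ∀ᶠ z in nhdsWithin (0:ℂ) (ntRegion 0 K), ∀ k : ℕ,
      ‖(-1:ℂ)^(n+1) * ((k:ℂ)+1)^(n+1) * z * Tm k z‖
        ≤ K * (((k:ℝ)+1)^(n+1) / (Nat.factorial (k+1))) := by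
    filter_upwards [self_mem_nhdsWithin] with z hz k
    obtain ⟨him, habs⟩ := hz
    have habs' : ‖z‖ ≤ K * z.im := by
      simpa using habs
    have hfac : (0:ℝ) < (Nat.factorial (k+1) : ℝ) := by positivity
    have hTb := norm_Tm_le him le_rfl k
    calc ‖(-1:ℂ)^(n+1) * ((k:ℂ)+1)^(n+1) * z * Tm k z‖
        = ((k:ℝ)+1)^(n+1) * (‖z‖ * ‖Tm k z‖) := by
          rw [norm_mul, norm_mul, norm_mul, norm_pow, norm_pow, norm_neg, norm_one,
            one_pow, one_mul, hnorm_c k, mul_assoc]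
      _ ≤ ((k:ℝ)+1)^(n+1) * ((K * z.im) * ((1/z.im) * (1/(Nat.factorial (k+1))))) := by
          gcongr
      _ = K * (((k:ℝ)+1)^(n+1) / (Nat.factorial (k+1))) := by
          field_simp [ne_of_gt him]
  have := tendsto_tsum_of_dominated_convergence (𝓕 := nhdsWithin (0:ℂ) (ntRegion 0 K))
    (g := fun _ : ℕ => (0:ℂ)) ((summable_pow_fact (n+1)).mul_left K) hpt hbd
  simpa using this

lemma hasPT (n : ℕ) :
    HasPseudoTaylor (fun z : ℂ => -(Real.exp 1 : ℂ)⁻¹ * ∑' k : ℕ, Tm k z) 0 n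
      (fun j => -(Real.exp 1 : ℂ)⁻¹ * ∑' k : ℕ, bco k j) := by
  intro K hK
  have hlim := (taylor_limit n K hK).const_mul (-(Real.exp 1 : ℂ)⁻¹)
  rw [mul_zero] at hlim
  apply hlim.congr'
  filter_upwards [self_mem_nhdsWithin] with z hz
  obtain ⟨him, -⟩ := hz
  have hzne : z ≠ 0 := by
    intro h; rw [h] at him; simp at him
  have hz0 : z - ((0:ℝ):ℂ) = z := by simp
  simp only [hz0]
  have hsum_eq : ∑ j ∈ Finset.range (n+1),
        (-(Real.exp 1 : ℂ)⁻¹ * ∑' k : ℕ, bco k j) * z^j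
      = -(Real.exp 1 : ℂ)⁻¹ * ∑ j ∈ Finset.range (n+1), (∑' k : ℕ, bco k j) * z^j := by
    rw [Finset.mul_sum]
    exact Finset.sum_congr rfl fun j _ => by ring
  rw [hsum_eq, ← mul_sub, key_sum him n]
  rw [mul_div_assoc, ← tsum_div_const]
  congr 1
  apply tsum_congr
  intro k
  rw [show (-z*((k:ℂ)+1)) = (-1)*(z*((k:ℂ)+1)) from by ring, mul_pow, mul_pow,
    eq_div_iff (pow_ne_zero _ hzne)]
  ring

lemma shift_cast (k : ℕ) : (1 / ((k:ℂ)+1)) = ((1/((k:ℝ)+1) : ℝ) : ℂ) := by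
  push_cast; ring

/-- core norm bound via abs lower bound on denominator -/
lemma norm_Tm_le_abs {z : ℂ} {δ : ℝ} (hδ : 0 < δ) (k : ℕ)
    (habs : δ ≤ ‖z + 1 / ((k : ℂ) + 1)‖) :
    ‖Tm k z‖ ≤ (1/δ) * (1 / (Nat.factorial (k+1))) := by
  have hfac : (0:ℝ) < (Nat.factorial (k+1) : ℝ) := by positivity
  calc ‖Tm k z‖ = (1/(Nat.factorial (k+1) : ℝ)) * (1/‖z + 1 / ((k : ℂ) + 1)‖) := by
        rw [Tm, norm_div, norm_one, norm_mul, Complex.norm_natCast]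
        simp [one_div, mul_inv, mul_comm]
    _ ≤ (1/(Nat.factorial (k+1) : ℝ)) * (1/δ) := by gcongr
    _ = (1/δ) * (1 / (Nat.factorial (k+1))) := mul_comm _ _

lemma pole_sep (k0 k : ℕ) (hne : k ≠ k0) :
    1/(((k0:ℝ)+1)*((k0:ℝ)+2)) ≤ |1/((k:ℝ)+1) - 1/((k0:ℝ)+1)| := by
  have hk : (0:ℝ) < (k:ℝ)+1 := by positivity
  have hk0 : (0:ℝ) < (k0:ℝ)+1 := by positivity
  rcases lt_or_gt_of_ne hne with h | h
  · -- k < k0 : difference is positive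
    have hc : (k:ℝ)+1 ≤ (k0:ℝ) := by exact_mod_cast Nat.succ_le_of_lt h
    have key : 1/(((k0:ℝ)+1)*((k0:ℝ)+2)) ≤ 1/((k:ℝ)+1) - 1/((k0:ℝ)+1) := by
      rw [div_sub_div _ _ (ne_of_gt hk) (ne_of_gt hk0), div_le_div_iff₀ (by positivity)
        (by positivity)]
      have h1 : (1:ℝ) ≤ (k0:ℝ) - k := by linarith
      nlinarith [mul_le_mul_of_nonneg_right h1 (by positivity : (0:ℝ) ≤ ((k0:ℝ)+2)*((k0:ℝ)+1)),
        mul_le_mul_of_nonneg_right (show (k:ℝ)+1 ≤ (k0:ℝ)+2 by linarith) (le_of_lt hk0)]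
    exact le_trans key (le_abs_self _)
  · have hc : (k0:ℝ)+1 ≤ (k:ℝ) := by exact_mod_cast Nat.succ_le_of_lt h
    have key : 1/(((k0:ℝ)+1)*((k0:ℝ)+2)) ≤ 1/((k0:ℝ)+1) - 1/((k:ℝ)+1) := by
      rw [div_sub_div _ _ (ne_of_gt hk0) (ne_of_gt hk), div_le_div_iff₀ (by positivity)
        (by positivity)]
      have h1 : (0:ℝ) ≤ (k:ℝ) - k0 - 1 := by linarith
      nlinarith [mul_nonneg (mul_nonneg h1 (le_of_lt hk0)) (le_of_lt hk0)]
    calc 1/(((k0:ℝ)+1)*((k0:ℝ)+2)) ≤ 1/((k0:ℝ)+1) - 1/((k:ℝ)+1) := key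
      _ ≤ |1/((k:ℝ)+1) - 1/((k0:ℝ)+1)| := by
        rw [abs_sub_comm]; exact le_abs_self _

lemma not_ext :
    ¬ ∃ (g : ℂ → ℂ) (r : ℝ), 0 < r ∧ DifferentiableOn ℂ g (Metric.ball 0 r) ∧
        Set.EqOn (fun z : ℂ => -(Real.exp 1 : ℂ)⁻¹ * ∑' k : ℕ, Tm k z)
          g (UHP ∩ Metric.ball 0 r) := by
  rintro ⟨g, r, hr, hg, heq⟩
  set f : ℂ → ℂ := fun z : ℂ => -(Real.exp 1 : ℂ)⁻¹ * ∑' k : ℕ, Tm k z with hf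
  -- pick k0 with q := 1/(k0+1) < r/2
  obtain ⟨k0, hk0⟩ := exists_nat_gt (2/r)
  set q : ℝ := 1/((k0:ℝ)+1) with hq
  have hq0 : 0 < q := by positivity
  have hqr : q < r/2 := by
    rw [hq, div_lt_div_iff₀ (by positivity) (by positivity)]
    have h2 : 2/r < (k0:ℝ) + 1 := lt_trans hk0 (by linarith)
    rw [div_lt_iff₀ hr] at h2
    linarith
  set p : ℂ := ((-q : ℝ) : ℂ) with hp
  have hpball : p ∈ Metric.ball (0:ℂ) r := by
    rw [mem_ball_zero_iff, hp, Complex.norm_real, Real.norm_eq_abs, abs_neg,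
      _root_.abs_of_pos hq0]
    linarith
  -- the approach sequence
  set zs : ℕ → ℂ := fun m => p + ((1/((m:ℝ)+1) : ℝ) : ℂ) * I with hzs
  have hzim : ∀ m : ℕ, (zs m).im = 1/((m:ℝ)+1) := by
    intro m
    simp only [hzs, hp, Complex.add_im, Complex.mul_im, Complex.ofReal_re, Complex.ofReal_im,
      Complex.I_re, Complex.I_im]
    ring
  have hzim_pos : ∀ m : ℕ, 0 < (zs m).im := by
    intro m; rw [hzim]; positivity
  -- zs m → p
  have hz_tend : Tendsto zs atTop (nhds p) := by
    have h1 : Tendsto (fun m : ℕ => (1/((m:ℝ)+1) : ℝ)) atTop (nhds 0) :=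
      tendsto_one_div_add_atTop_nhds_zero_nat
    have h2 : Tendsto (fun m : ℕ => ((1/((m:ℝ)+1) : ℝ) : ℂ)) atTop (nhds ((0:ℝ):ℂ)) :=
      (Complex.continuous_ofReal.tendsto 0).comp h1
    have h3 := (h2.mul_const I).const_add p
    have hpt : p + ((0:ℝ):ℂ)*I = p := by simp
    rw [hpt] at h3
    exact h3
  -- eventually in the ball
  have hz_ball : ∀ᶠ m in atTop, zs m ∈ Metric.ball (0:ℂ) r := by
    have h1 : Tendsto (fun m : ℕ => (1/((m:ℝ)+1) : ℝ)) atTop (nhds 0) :=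
      tendsto_one_div_add_atTop_nhds_zero_nat
    filter_upwards [h1.eventually (gt_mem_nhds (show (0:ℝ) < r/2 by linarith))] with m hm
    rw [mem_ball_zero_iff, hzs]
    calc ‖p + ((1/((m:ℝ)+1) : ℝ) : ℂ) * I‖ ≤ ‖p‖ + ‖((1/((m:ℝ)+1) : ℝ) : ℂ) * I‖ :=
          norm_add_le _ _
      _ = q + (1/((m:ℝ)+1)) := by
          rw [norm_mul, Complex.norm_I, mul_one, hp, Complex.norm_real, Complex.norm_real,
            Real.norm_eq_abs, Real.norm_eq_abs, abs_neg, _root_.abs_of_pos hq0,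
            _root_.abs_of_pos (by positivity)]
      _ < r/2 + r/2 := by
          apply add_lt_add hqr hm
      _ = r := by ring
  -- f (zs m) → g p
  have hg_cont : ContinuousAt g p := (hg.differentiableAt (isOpen_ball.mem_nhds hpball)).continuousAt
  have hlim : Tendsto (fun m => f (zs m)) atTop (nhds (g p)) := by
    have h1 : Tendsto (fun m => g (zs m)) atTop (nhds (g p)) := hg_cont.tendsto.comp hz_tend
    apply h1.congr'
    filter_upwards [hz_ball] with m hm
    exact (heq ⟨hzim_pos m, hm⟩).symm
  -- lower bound for ‖f (zs m)‖
  set δ0 : ℝ := 1/(((k0:ℝ)+1)*((k0:ℝ)+2)) with hδ0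
  have hδ0pos : 0 < δ0 := by positivity
  set E : ℝ := ∑' k : ℕ, (1:ℝ)/(Nat.factorial (k+1)) with hE
  set C : ℝ := (1/δ0) * E with hC
  have key_shift : ∀ m : ℕ, zs m + 1/((k0:ℂ)+1) = ((1/((m:ℝ)+1) : ℝ) : ℂ) * I := by
    intro m
    have hz0 : ((-q:ℝ):ℂ) + 1/((k0:ℂ)+1) = 0 := by
      rw [shift_cast k0, hq]
      push_cast
      ring
    simp only [hzs]
    calc p + ((1/((m:ℝ)+1) : ℝ) : ℂ)*I + 1/((k0:ℂ)+1)
        = ((1/((m:ℝ)+1) : ℝ) : ℂ)*I + (((-q:ℝ):ℂ) + 1/((k0:ℂ)+1)) := by rw [hp]; ring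
      _ = ((1/((m:ℝ)+1) : ℝ) : ℂ)*I := by rw [hz0, add_zero]
  -- main term norm
  have main_norm : ∀ m : ℕ, ‖Tm k0 (zs m)‖ = ((m:ℝ)+1) * (1/(Nat.factorial (k0+1))) := by
    intro m
    rw [Tm, norm_div, norm_one, norm_mul, Complex.norm_natCast, key_shift m, norm_mul,
      Complex.norm_I, mul_one, Complex.norm_real, Real.norm_eq_abs,
      _root_.abs_of_pos (by positivity : (0:ℝ) < 1/((m:ℝ)+1))]
    have hfac : (0:ℝ) < (Nat.factorial (k0+1) : ℝ) := by positivity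
    have hm1 : (0:ℝ) < (m:ℝ)+1 := by positivity
    field_simp
  -- tail bound
  have tail_bound : ∀ m : ℕ, ‖∑' k : ℕ, if k = k0 then 0 else Tm k (zs m)‖ ≤ C := by
    intro m
    have hbd : ∀ k : ℕ, ‖if k = k0 then 0 else Tm k (zs m)‖
        ≤ (1/δ0) * ((1:ℝ)/(Nat.factorial (k+1))) := by
      intro k
      by_cases hk : k = k0
      · rw [if_pos hk, norm_zero]
        positivity
      · rw [if_neg hk]
        apply norm_Tm_le_abs hδ0pos
        -- abs ≥ |re| ≥ δ0
        have hre : (zs m + 1/((k:ℂ)+1)).re = 1/((k:ℝ)+1) - q := by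
          rw [shift_cast k]
          simp only [hzs, hp, Complex.add_re, Complex.mul_re, Complex.ofReal_re,
            Complex.ofReal_im, Complex.I_re, Complex.I_im]
          ring
        calc δ0 ≤ |1/((k:ℝ)+1) - q| := pole_sep k0 k hk
          _ = |(zs m + 1/((k:ℂ)+1)).re| := by rw [hre]
          _ ≤ ‖zs m + 1/((k:ℂ)+1)‖ := Complex.abs_re_le_norm _
          _ = ‖zs m + 1/((k:ℂ)+1)‖ := rfl
    have hsum : Summable (fun k : ℕ => (1/δ0) * ((1:ℝ)/(Nat.factorial (k+1)))) :=
      summable_w.mul_left _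
    calc ‖∑' k : ℕ, if k = k0 then 0 else Tm k (zs m)‖
        ≤ ∑' k : ℕ, ‖if k = k0 then 0 else Tm k (zs m)‖ :=
          norm_tsum_le_tsum_norm (hsum.of_nonneg_of_le (fun k => norm_nonneg _) hbd)
      _ ≤ ∑' k : ℕ, (1/δ0) * ((1:ℝ)/(Nat.factorial (k+1))) :=
          Summable.tsum_le_tsum hbd (hsum.of_nonneg_of_le (fun k => norm_nonneg _) hbd) hsum
      _ = C := by rw [hC, hE, tsum_mul_left]
  have lower : ∀ m : ℕ, (Real.exp 1)⁻¹ * (((m:ℝ)+1) * (1/(Nat.factorial (k0+1))) - C)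
      ≤ ‖f (zs m)‖ := by
    intro m
    have hsplit : (∑' k : ℕ, Tm k (zs m))
        = Tm k0 (zs m) + ∑' k : ℕ, if k = k0 then 0 else Tm k (zs m) :=
      Summable.tsum_eq_add_tsum_ite (summable_Tm (hzim_pos m)) k0
    have hnorm_c : ‖(-(Real.exp 1 : ℂ)⁻¹)‖ = (Real.exp 1)⁻¹ := by
      rw [norm_neg, norm_inv, Complex.norm_real, Real.norm_eq_abs,
        _root_.abs_of_pos (Real.exp_pos 1)]
    rw [hf]
    simp only
    rw [hsplit, norm_mul, hnorm_c]
    have h1 : ((m:ℝ)+1) * (1/(Nat.factorial (k0+1))) - C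
        ≤ ‖Tm k0 (zs m) + ∑' k : ℕ, if k = k0 then 0 else Tm k (zs m)‖ := by
      have h2 := norm_add_le (Tm k0 (zs m) + ∑' k : ℕ, if k = k0 then 0 else Tm k (zs m))
        (-(∑' k : ℕ, if k = k0 then 0 else Tm k (zs m)))
      simp only [add_neg_cancel_right, norm_neg] at h2
      have h3 := tail_bound m
      have h4 := main_norm m
      linarith [h2, h3, (main_norm m).symm.le]
    have hpos : (0:ℝ) ≤ (Real.exp 1)⁻¹ := by positivity
    exact mul_le_mul_of_nonneg_left h1 hpos
  -- divergence
  have hdiv : Tendsto (fun m : ℕ => (Real.exp 1)⁻¹ *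
      (((m:ℝ)+1) * (1/(Nat.factorial (k0+1))) - C)) atTop atTop := by
    apply Tendsto.const_mul_atTop (by positivity : (0:ℝ) < (Real.exp 1)⁻¹)
    apply tendsto_atTop_add_const_right
    apply Tendsto.atTop_mul_const (by positivity : (0:ℝ) < 1/(Nat.factorial (k0+1) : ℝ))
    exact tendsto_atTop_add_const_right _ _ tendsto_natCast_atTop_atTop
  have hnorm_div : Tendsto (fun m => ‖f (zs m)‖) atTop atTop :=
    tendsto_atTop_mono lower hdiv
  exact not_tendsto_nhds_of_tendsto_atTop hnorm_div _ hlim.norm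


theorem example_infinite_order_not_analytic :
    IsPick (fun z : ℂ =>
      -(Real.exp 1 : ℂ)⁻¹ * ∑' k : ℕ, 1 / ((Nat.factorial (k + 1) : ℂ) * (z + 1 / ((k : ℂ) + 1)))) ∧
    (∀ n : ℕ, ∃ c : ℕ → ℂ, HasPseudoTaylor
      (fun z : ℂ =>
        -(Real.exp 1 : ℂ)⁻¹ * ∑' k : ℕ, 1 / ((Nat.factorial (k + 1) : ℂ) * (z + 1 / ((k : ℂ) + 1))))
      0 n c) ∧
    ¬ ∃ (g : ℂ → ℂ) (r : ℝ), 0 < r ∧ DifferentiableOn ℂ g (Metric.ball 0 r) ∧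
        Set.EqOn
          (fun z : ℂ =>
            -(Real.exp 1 : ℂ)⁻¹ *
              ∑' k : ℕ, 1 / ((Nat.factorial (k + 1) : ℂ) * (z + 1 / ((k : ℂ) + 1))))
          g (UHP ∩ Metric.ball 0 r) := by
  refine ⟨⟨?_, ?_⟩, ?_, ?_⟩
  · exact fun z hz => ((F_diff z hz).const_mul _)
  · exact fun z hz => f_im_nonneg hz
  · exact fun n => ⟨_, hasPT n⟩
  · exact not_ext
end
end

section
/- Let f be a nonconstant function in the Pick class and x ∈ ℝ a B-point for f (so that the nontangential limit f(x) ∈ ℝ and angular derivative f'(x) > 0 exist). Then the reduction g(z) = -1/(f(z) - f(x)) + 1/(f'(x)(z-x)) also belongs to the Pick class. -/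
open Complex Filter Finset Metric Set

noncomputable section

lemma isOpen_UHP : IsOpen UHP := isOpen_Ioi.preimage Complex.continuous_im

lemma normSq_conj_sub (u p : ℂ) :
    Complex.normSq (u - (starRingEnd ℂ) p) = Complex.normSq (u - p) + 4 * u.im * p.im := by
  simp [Complex.normSq_apply, Complex.sub_re, Complex.sub_im]; ring

lemma cayley_abs_lt (u p : ℂ) (hu : 0 < u.im) (hp : 0 < p.im) :
    ‖(u - p) / (u - (starRingEnd ℂ) p)‖ < 1 := by
  have hne : u - (starRingEnd ℂ) p ≠ 0 := by
    intro h
    have : (u - (starRingEnd ℂ) p).im = 0 := by rw [h]; simp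
    simp [Complex.sub_im] at this
    linarith
  rw [norm_div, div_lt_one (norm_pos_iff.2 hne)]
  have h2 : Complex.normSq (u - p) < Complex.normSq (u - (starRingEnd ℂ) p) := by
    rw [normSq_conj_sub]; nlinarith
  have := Real.sqrt_lt_sqrt (Complex.normSq_nonneg _) h2
  simpa [Complex.norm_def] using this

lemma im_inv_cayley (z v : ℂ) (hz : 0 < z.im) (hv : ‖v‖ < 1) :
    0 < ((z - v * (starRingEnd ℂ) z) / (1 - v)).im := by
  have hv1 : (1 : ℂ) - v ≠ 0 := by
    intro h
    have : v = 1 := by linear_combination -h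
    simp [this] at hv
  rw [Complex.div_im]
  have hnum : (z - v * (starRingEnd ℂ) z).im * (1 - v).re
      - (z - v * (starRingEnd ℂ) z).re * (1 - v).im = z.im * (1 - Complex.normSq v) := by
    simp [Complex.normSq_apply, Complex.sub_re, Complex.sub_im, Complex.mul_re, Complex.mul_im]
    ring
  have hden : 0 < Complex.normSq (1 - v) := Complex.normSq_pos.2 hv1
  have hsq : Complex.normSq v < 1 := by
    have := Complex.sq_norm v
    nlinarith [norm_nonneg v]
  rw [div_sub_div_same, hnum]
  exact div_pos (by nlinarith) hden

lemma cayley_left_inv {z w : ℂ} (hz : 0 < z.im) (hw : 0 < w.im) :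
    (z - ((w - z) / (w - (starRingEnd ℂ) z)) * (starRingEnd ℂ) z) /
      (1 - (w - z) / (w - (starRingEnd ℂ) z)) = w := by
  have hd : w - (starRingEnd ℂ) z ≠ 0 := by
    intro h
    have : (w - (starRingEnd ℂ) z).im = 0 := by rw [h]; simp
    simp [Complex.sub_im] at this
    linarith
  have hB : (1 : ℂ) - (w - z) / (w - (starRingEnd ℂ) z) ≠ 0 := by
    intro h
    have h1 : (w - z) / (w - (starRingEnd ℂ) z) = 1 := by linear_combination -h
    field_simp at h1
    have him := congrArg Complex.im h1
    simp at him
    linarith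
  have hzc : z - (starRingEnd ℂ) z ≠ 0 := by
    intro h
    have : (z - (starRingEnd ℂ) z).im = 0 := by rw [h]; simp
    simp [Complex.sub_im] at this
    linarith
  have hq : (w - z) / (w - (starRingEnd ℂ) z) * (w - (starRingEnd ℂ) z) = w - z :=
    div_mul_cancel₀ _ hd
  rw [div_eq_iff hB]
  linear_combination hq

lemma schwarz_pick (f : ℂ → ℂ) (hd : DifferentiableOn ℂ f UHP)
    (hpos : ∀ z ∈ UHP, 0 < (f z).im) {z w : ℂ} (hz : z ∈ UHP) (hw : w ∈ UHP) :
    ‖(f w - f z) / (f w - (starRingEnd ℂ) (f z))‖ ≤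
      ‖(w - z) / (w - (starRingEnd ℂ) z)‖ := by
  have hzim : 0 < z.im := hz
  have hwim : 0 < w.im := hw
  have hfz : 0 < (f z).im := hpos z hz
  set Φ : ℂ → ℂ := fun v => (z - v * (starRingEnd ℂ) z) / (1 - v) with hΦdef
  set ψ : ℂ → ℂ := fun u => (u - f z) / (u - (starRingEnd ℂ) (f z)) with hψdef
  have hΦmem : ∀ v ∈ ball (0:ℂ) 1, Φ v ∈ UHP := fun v hv =>
    im_inv_cayley z v hzim (by simpa [mem_ball, dist_zero_right] using hv)
  have hΦdiff : DifferentiableOn ℂ Φ (ball 0 1) := by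
    apply DifferentiableOn.div
    · exact (differentiableOn_const _).sub (differentiableOn_id.mul (differentiableOn_const _))
    · exact (differentiableOn_const _).sub differentiableOn_id
    · intro v hv
      intro h
      have : v = 1 := by linear_combination -h
      simp [this, mem_ball, dist_zero_right] at hv
  have hψdiff : DifferentiableOn ℂ ψ UHP := by
    apply DifferentiableOn.div
    · exact differentiableOn_id.sub (differentiableOn_const _)
    · exact differentiableOn_id.sub (differentiableOn_const _)
    · intro u hu
      intro h
      have : (u - (starRingEnd ℂ) (f z)).im = 0 := by rw [h]; simp
      simp [Complex.sub_im] at this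
      have : u.im = -(f z).im := by linarith
      have hu' : 0 < u.im := hu
      linarith
  have hFdiff : DifferentiableOn ℂ (fun v => ψ (f (Φ v))) (ball 0 1) := by
    exact (hψdiff.comp (hd.comp hΦdiff hΦmem) (fun v hv => hpos _ (hΦmem v hv)))
  have hΦ0 : Φ 0 = z := by simp [hΦdef]
  have hF0 : ψ (f (Φ 0)) = 0 := by rw [hΦ0]; simp [hψdef]
  have hmaps : MapsTo (fun v => ψ (f (Φ v))) (ball 0 1) (ball 0 1) := by
    intro v hv
    have := cayley_abs_lt (f (Φ v)) (f z) (hpos _ (hΦmem v hv)) hfz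
    simpa [mem_ball, dist_zero_right, hψdef] using this
  have hφw : ‖(w - z) / (w - (starRingEnd ℂ) z)‖ < 1 := cayley_abs_lt w z hwim hzim
  have := Complex.norm_le_norm_of_mapsTo_ball hFdiff (hmaps.mono_right ball_subset_closedBall) hF0 hφw
  rwa [show Φ ((w - z) / (w - (starRingEnd ℂ) z)) = w from cayley_left_inv hzim hwim] at this

lemma pick_im_pos (f : ℂ → ℂ) (hd : DifferentiableOn ℂ f UHP)
    (him : ∀ z ∈ UHP, 0 ≤ (f z).im)
    (hnc : ∃ z ∈ UHP, ∃ w ∈ UHP, f z ≠ f w) :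
    ∀ z ∈ UHP, 0 < (f z).im := by
  have han : AnalyticOnNhd ℂ f UHP := hd.analyticOnNhd isOpen_UHP
  have hconn : IsPreconnected UHP := (convex_halfSpace_im_gt 0).isPreconnected
  rcases han.is_constant_or_isOpen hconn with ⟨c, hc⟩ | hopen
  · obtain ⟨z, hz, w, hw, hne⟩ := hnc
    exact absurd ((hc z hz).trans (hc w hw).symm) hne
  · intro z hz
    rcases lt_or_eq_of_le (him z hz) with h | h
    · exact h
    · exfalso
      have hio : IsOpen (f '' UHP) := hopen UHP le_rfl isOpen_UHP
      obtain ⟨ε, hε, hball⟩ := Metric.isOpen_iff.1 hio (f z) ⟨z, hz, rfl⟩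
      have hmem : f z - (ε/2) * Complex.I ∈ ball (f z) ε := by
        rw [mem_ball, dist_eq_norm,
          show f z - (ε:ℂ)/2 * Complex.I - f z = -((ε:ℂ)/2 * Complex.I) from by ring,
          norm_neg]
        simp
        rw [abs_of_pos (by linarith)]
        linarith
      obtain ⟨u, hu, huf⟩ := hball hmem
      have := him u hu
      rw [huf] at this
      simp [Complex.sub_im, Complex.mul_im] at this
      nlinarith [this]

lemma key_ineq (f : ℂ → ℂ) (hd : DifferentiableOn ℂ f UHP)
    (hpos : ∀ z ∈ UHP, 0 < (f z).im) {z w : ℂ} (hz : z ∈ UHP) (hw : w ∈ UHP) :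
    w.im * z.im * Complex.normSq (f w - (starRingEnd ℂ) (f z)) ≤
      (f w).im * (f z).im * Complex.normSq (w - (starRingEnd ℂ) z) := by
  have hsp := schwarz_pick f hd hpos hz hw
  have hbne : f w - (starRingEnd ℂ) (f z) ≠ 0 := by
    intro h
    have : (f w - (starRingEnd ℂ) (f z)).im = 0 := by rw [h]; simp
    simp [Complex.sub_im] at this
    have := hpos w hw; have := hpos z hz; linarith
  have hdne : w - (starRingEnd ℂ) z ≠ 0 := by
    intro h
    have : (w - (starRingEnd ℂ) z).im = 0 := by rw [h]; simp
    simp [Complex.sub_im] at this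
    have hzi : 0 < z.im := hz; have hwi : 0 < w.im := hw; linarith
  rw [norm_div, norm_div, div_le_div_iff₀ (norm_pos_iff.2 hbne) (norm_pos_iff.2 hdne)]
    at hsp
  have hsq : Complex.normSq (f w - f z) * Complex.normSq (w - (starRingEnd ℂ) z) ≤
      Complex.normSq (w - z) * Complex.normSq (f w - (starRingEnd ℂ) (f z)) := by
    have h2 := mul_le_mul_of_nonneg_left hsp (norm_nonneg (f w - f z))
    have h3 := mul_le_mul_of_nonneg_right hsp (norm_nonneg (w - z))
    calc Complex.normSq (f w - f z) * Complex.normSq (w - (starRingEnd ℂ) z)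
        = (‖f w - f z‖ * ‖w - (starRingEnd ℂ) z‖) *
          (‖f w - f z‖ * ‖w - (starRingEnd ℂ) z‖) := by
          rw [← Complex.sq_norm, ← Complex.sq_norm]; ring
      _ ≤ (‖w - z‖ * ‖f w - (starRingEnd ℂ) (f z)‖) *
          (‖w - z‖ * ‖f w - (starRingEnd ℂ) (f z)‖) := by
          apply mul_le_mul hsp hsp (by positivity) (by positivity)
      _ = Complex.normSq (w - z) * Complex.normSq (f w - (starRingEnd ℂ) (f z)) := by
          rw [← Complex.sq_norm, ← Complex.sq_norm]; ring
  have e1 := normSq_conj_sub (f w) (f z)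
  have e2 := normSq_conj_sub w z
  nlinarith [Complex.normSq_nonneg (f w - (starRingEnd ℂ) (f z)),
    Complex.normSq_nonneg (w - (starRingEnd ℂ) z)]

lemma star_limit (f : ℂ → ℂ) (x L A : ℝ) (hd : DifferentiableOn ℂ f UHP)
    (hpos : ∀ z ∈ UHP, 0 < (f z).im)
    (hL : NTTendsto f x (L : ℂ)) (hApos : 0 < A)
    (hA : NTTendsto (fun z => (f z - (L:ℂ))/(z - (x:ℂ))) x (A : ℂ))
    {z : ℂ} (hz : z ∈ UHP) :
    z.im * Complex.normSq (f z - (L:ℂ)) ≤ A * (f z).im * Complex.normSq (z - (x:ℂ)) := by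
  set wt : ℝ → ℂ := fun t => (x:ℂ) + t * Complex.I with hwt
  have hwtim : ∀ t : ℝ, (wt t).im = t := by intro t; simp [hwt]
  have hwtsub : ∀ t : ℝ, wt t - (x:ℂ) = (t:ℂ) * Complex.I := by intro t; simp [hwt]
  have h1 : Tendsto wt (nhdsWithin 0 (Set.Ioi 0)) (nhdsWithin (x:ℂ) (ntRegion x 1)) := by
    rw [tendsto_nhdsWithin_iff]
    constructor
    · have hc : Continuous wt := by
        exact continuous_const.add ((Complex.continuous_ofReal).mul continuous_const)
      have h0 : Tendsto wt (nhds 0) (nhds (wt 0)) := hc.tendsto 0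
      rw [show wt 0 = (x:ℂ) from by simp [hwt]] at h0
      exact h0.mono_left nhdsWithin_le_nhds
    · filter_upwards [self_mem_nhdsWithin] with t ht
      refine ⟨by rw [hwtim]; exact Set.mem_Ioi.1 ht, ?_⟩
      rw [hwtsub, hwtim]
      simp [abs_of_pos (Set.mem_Ioi.1 ht)]
  have hwtU : ∀ᶠ t in nhdsWithin (0:ℝ) (Set.Ioi 0), wt t ∈ UHP := by
    filter_upwards [self_mem_nhdsWithin] with t ht
    simpa [UHP, hwtim] using Set.mem_Ioi.1 ht
  have h2 : Tendsto (fun t => f (wt t)) (nhdsWithin 0 (Set.Ioi 0)) (nhds (L:ℂ)) :=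
    (hL 1 one_pos).comp h1
  have h3 : Tendsto (fun t => (f (wt t) - (L:ℂ))/(wt t - (x:ℂ)))
      (nhdsWithin 0 (Set.Ioi 0)) (nhds (A:ℂ)) := (hA 1 one_pos).comp h1
  have h4 : Tendsto (fun t => (f (wt t)).im / t) (nhdsWithin 0 (Set.Ioi 0)) (nhds A) := by
    have hre : Tendsto (fun t => ((f (wt t) - (L:ℂ))/(wt t - (x:ℂ))).re)
        (nhdsWithin 0 (Set.Ioi 0)) (nhds A) := by
      have := (Complex.continuous_re.tendsto (A:ℂ)).comp h3
      exact this
    apply hre.congr'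
    filter_upwards [self_mem_nhdsWithin] with t ht
    have ht0 : (0:ℝ) < t := Set.mem_Ioi.1 ht
    rw [hwtsub]
    rw [Complex.div_re]
    simp [Complex.normSq_apply]
    field_simp
  have hzim : 0 < z.im := hz
  have hfzim : 0 < (f z).im := hpos z hz
  have hmain : ∀ᶠ t in nhdsWithin (0:ℝ) (Set.Ioi 0),
      z.im * Complex.normSq (f (wt t) - ((starRingEnd ℂ) (f z))) ≤
        ((f (wt t)).im / t) * ((f z).im * Complex.normSq (wt t - ((starRingEnd ℂ) z))) := by
    filter_upwards [self_mem_nhdsWithin, hwtU] with t ht htU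
    have ht0 : (0:ℝ) < t := Set.mem_Ioi.1 ht
    have hk := key_ineq f hd hpos hz htU
    rw [hwtim] at hk
    rw [div_mul_eq_mul_div, le_div_iff₀ ht0]
    nlinarith [hk]
  have hlhs : Tendsto (fun t => z.im * Complex.normSq (f (wt t) - ((starRingEnd ℂ) (f z))))
      (nhdsWithin 0 (Set.Ioi 0)) (nhds (z.im * Complex.normSq ((L:ℂ) - ((starRingEnd ℂ) (f z))))) := by
    exact tendsto_const_nhds.mul ((Complex.continuous_normSq.tendsto _).comp
      (h2.sub tendsto_const_nhds))
  have hwtx : Tendsto wt (nhdsWithin 0 (Set.Ioi 0)) (nhds (x:ℂ)) :=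
    h1.mono_right nhdsWithin_le_nhds
  have hrhs : Tendsto (fun t => ((f (wt t)).im / t) * ((f z).im * Complex.normSq (wt t - ((starRingEnd ℂ) z))))
      (nhdsWithin 0 (Set.Ioi 0))
      (nhds (A * ((f z).im * Complex.normSq ((x:ℂ) - ((starRingEnd ℂ) z))))) := by
    exact h4.mul (tendsto_const_nhds.mul ((Complex.continuous_normSq.tendsto _).comp
      (hwtx.sub tendsto_const_nhds)))
  have hfin := le_of_tendsto_of_tendsto hlhs hrhs hmain
  have e1 : Complex.normSq ((L:ℂ) - ((starRingEnd ℂ) (f z))) = Complex.normSq (f z - (L:ℂ)) := by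
    rw [show (L:ℂ) - (starRingEnd ℂ) (f z) = -((starRingEnd ℂ) (f z - (L:ℂ))) from by
      rw [map_sub]; rw [Complex.conj_ofReal]; ring]
    rw [Complex.normSq_neg, Complex.normSq_conj]
  have e2 : Complex.normSq ((x:ℂ) - ((starRingEnd ℂ) z)) = Complex.normSq (z - (x:ℂ)) := by
    rw [show (x:ℂ) - (starRingEnd ℂ) z = -((starRingEnd ℂ) (z - (x:ℂ))) from by
      rw [map_sub]; rw [Complex.conj_ofReal]; ring]
    rw [Complex.normSq_neg, Complex.normSq_conj]
  rw [e1, e2] at hfin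
  linarith [hfin]


theorem reduction_is_Pick (f : ℂ → ℂ) (x L A : ℝ)
    (hf : IsPick f)
    (hnc : ∃ z ∈ UHP, ∃ w ∈ UHP, f z ≠ f w)
    (hL : NTTendsto f x (L : ℂ))
    (hApos : 0 < A)
    (hA : NTTendsto (fun z => (f z - (L : ℂ)) / (z - (x : ℂ))) x (A : ℂ)) :
    IsPick (fun z => -1 / (f z - (L : ℂ)) + 1 / ((A : ℂ) * (z - (x : ℂ)))) := by
  have hpos : ∀ z ∈ UHP, 0 < (f z).im := pick_im_pos f hf.1 hf.2 hnc
  have hfne : ∀ z ∈ UHP, f z - (L:ℂ) ≠ 0 := by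
    intro z hz h
    have : (f z - (L:ℂ)).im = 0 := by rw [h]; simp
    simp [Complex.sub_im] at this
    have := hpos z hz; linarith
  have hAne : (A:ℂ) ≠ 0 := by exact_mod_cast hApos.ne'
  have hzxne : ∀ z ∈ UHP, (A:ℂ) * (z - (x:ℂ)) ≠ 0 := by
    intro z hz
    apply mul_ne_zero hAne
    intro h
    have : (z - (x:ℂ)).im = 0 := by rw [h]; simp
    simp [Complex.sub_im] at this
    have hzi : 0 < z.im := hz; linarith
  constructor
  · apply DifferentiableOn.add
    · exact (differentiableOn_const _).div (hf.1.sub (differentiableOn_const _)) hfne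
    · exact (differentiableOn_const _).div
        ((differentiableOn_const _).mul (differentiableOn_id.sub (differentiableOn_const _)))
        hzxne
  · intro z hz
    have hzi : 0 < z.im := hz
    have hstar := star_limit f x L A hf.1 hpos hL hApos hA hz
    have hnsq1 : 0 < Complex.normSq (f z - (L:ℂ)) := Complex.normSq_pos.2 (hfne z hz)
    have hzx : z - (x:ℂ) ≠ 0 := by
      intro h
      have : (z - (x:ℂ)).im = 0 := by rw [h]; simp
      simp [Complex.sub_im] at this; linarith
    have hnsq2 : 0 < Complex.normSq (z - (x:ℂ)) := Complex.normSq_pos.2 hzx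
    have him : (-1 / (f z - (L:ℂ)) + 1 / ((A:ℂ) * (z - (x:ℂ)))).im =
        (f z).im / Complex.normSq (f z - (L:ℂ))
          - z.im / (A * Complex.normSq (z - (x:ℂ))) := by
      rw [Complex.add_im]
      congr 1
      · rw [neg_div, one_div, Complex.neg_im, Complex.inv_im]
        rw [Complex.sub_im]
        simp [neg_div]
      · rw [one_div, Complex.inv_im]
        rw [Complex.mul_im, Complex.normSq_mul]
        simp [Complex.sub_im, Complex.sub_re, Complex.normSq_ofReal]
        rw [neg_div]
        congr 1
        field_simp
    rw [him, sub_nonneg, div_le_div_iff₀ (by positivity) hnsq1]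
    nlinarith [hstar]
end
end

section
/- Let g, G be in the Pick class and x ∈ ℝ, with G analytic at x, and suppose g(z) - G(z) = o((z-x)^N) nontangentially for some N ≥ 0. If f, F are the augmentations of g, G respectively at x by a^0 ∈ ℝ, a^1 > 0, then f(z) - F(z) = (g(z) - G(z))(F(z) - a^0)(f(z) - a^0) for all z in Π, and consequently f(z) - F(z) = o((z-x)^{N+2}) nontangentially. -/
open Complex Filter Finset Metric Set

noncomputable section

theorem augmentation_identity_and_littleO (g G f F : ℂ → ℂ) (x a₀ a₁ : ℝ) (N : ℕ)
    (hg : IsPick g) (hG : IsPick G) (hGan : AnalyticAt ℂ G (x : ℂ)) (ha₁ : 0 < a₁)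
    (hlo : NTLittleO (fun z => g z - G z) x N)
    (hfdef : ∀ z ∈ UHP, f z = (a₀ : ℂ) + 1 / (1 / ((a₁ : ℂ) * (z - (x : ℂ))) - g z))
    (hFdef : ∀ z ∈ UHP, F z = (a₀ : ℂ) + 1 / (1 / ((a₁ : ℂ) * (z - (x : ℂ))) - G z)) :
    (∀ z ∈ UHP, f z - F z = (g z - G z) * (F z - (a₀ : ℂ)) * (f z - (a₀ : ℂ))) ∧
    NTLittleO (fun z => f z - F z) x (N + 2) := by
  have hax : (a₁ : ℂ) ≠ 0 := by
    exact_mod_cast ha₁.ne'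
  have hzx : ∀ z ∈ UHP, z - (x : ℂ) ≠ 0 := by
    intro z hz h
    have : z.im = 0 := by
      have := congrArg Complex.im h
      simpa using this
    exact absurd this (ne_of_gt hz)
  -- the denominators are nonzero on UHP
  have hden : ∀ (h : ℂ → ℂ), (∀ z ∈ UHP, 0 ≤ (h z).im) → ∀ z ∈ UHP,
      1 / ((a₁ : ℂ) * (z - (x : ℂ))) - h z ≠ 0 := by
    intro h hh z hz
    have hw : ((a₁ : ℂ) * (z - (x : ℂ))) ≠ 0 := mul_ne_zero hax (hzx z hz)
    have hwim : ((a₁ : ℂ) * (z - (x : ℂ))).im = a₁ * z.im := by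
      simp [Complex.mul_im]
    have hns : 0 < Complex.normSq ((a₁ : ℂ) * (z - (x : ℂ))) := Complex.normSq_pos.mpr hw
    have him : (1 / ((a₁ : ℂ) * (z - (x : ℂ)))).im < 0 := by
      rw [one_div, Complex.inv_im, hwim]
      have : 0 < a₁ * z.im := mul_pos ha₁ hz
      exact div_neg_of_neg_of_pos (by linarith) hns
    intro hc
    have h2 : (1 / ((a₁ : ℂ) * (z - (x : ℂ))) - h z).im < 0 := by
      rw [Complex.sub_im]
      have := hh z hz
      linarith
    rw [hc] at h2
    simp at h2
  have hdg : ∀ z ∈ UHP, 1 / ((a₁ : ℂ) * (z - (x : ℂ))) - g z ≠ 0 :=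
    hden g hg.2
  have hdG : ∀ z ∈ UHP, 1 / ((a₁ : ℂ) * (z - (x : ℂ))) - G z ≠ 0 :=
    hden G hG.2
  -- the algebraic identity
  have hid : ∀ z ∈ UHP, f z - F z = (g z - G z) * (F z - (a₀ : ℂ)) * (f z - (a₀ : ℂ)) := by
    intro z hz
    rw [hfdef z hz, hFdef z hz]
    have h1 := hdg z hz
    have h2 := hdG z hz
    rw [show g z - G z = (1 / ((a₁ : ℂ) * (z - (x : ℂ))) - G z) - (1 / ((a₁ : ℂ) * (z - (x : ℂ))) - g z) by ring]
    generalize 1 / ((a₁ : ℂ) * (z - (x : ℂ))) - g z = A at *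
    generalize 1 / ((a₁ : ℂ) * (z - (x : ℂ))) - G z = B at *
    field_simp
    ring
  refine ⟨hid, ?_⟩
  -- nonvanishing of the second form of the denominators
  have hDg : ∀ z ∈ UHP, 1 / (a₁ : ℂ) - (z - (x : ℂ)) * g z ≠ 0 := by
    intro z hz
    have h1 : 1 / (a₁ : ℂ) - (z - (x : ℂ)) * g z
        = (z - (x : ℂ)) * (1 / ((a₁ : ℂ) * (z - (x : ℂ))) - g z) := by
      field_simp [hzx z hz]
    rw [h1]
    exact mul_ne_zero (hzx z hz) (hdg z hz)
  have hDG : ∀ z ∈ UHP, 1 / (a₁ : ℂ) - (z - (x : ℂ)) * G z ≠ 0 := by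
    intro z hz
    have h1 : 1 / (a₁ : ℂ) - (z - (x : ℂ)) * G z
        = (z - (x : ℂ)) * (1 / ((a₁ : ℂ) * (z - (x : ℂ))) - G z) := by
      field_simp [hzx z hz]
    rw [h1]
    exact mul_ne_zero (hzx z hz) (hdG z hz)
  intro K hK
  set l := nhdsWithin (x : ℂ) (ntRegion x K) with hl
  have hUHP : ∀ᶠ z in l, z ∈ UHP := by
    filter_upwards [self_mem_nhdsWithin] with z hz
    exact hz.1
  have hsub : Tendsto (fun z : ℂ => z - (x : ℂ)) l (nhds 0) := by
    have : Tendsto (fun z : ℂ => z - (x : ℂ)) (nhds (x : ℂ)) (nhds ((x : ℂ) - x)) :=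
      (continuous_id.sub continuous_const).tendsto _
    simpa using this.mono_left nhdsWithin_le_nhds
  have hGt : Tendsto G l (nhds (G (x : ℂ))) :=
    (hGan.continuousAt.tendsto).mono_left nhdsWithin_le_nhds
  have hzG : Tendsto (fun z : ℂ => (z - (x : ℂ)) * G z) l (nhds 0) := by
    simpa using hsub.mul hGt
  have hlo' : Tendsto (fun z : ℂ => (g z - G z) / (z - (x : ℂ)) ^ N) l (nhds 0) := hlo K hK
  have hzgG : Tendsto (fun z : ℂ => (z - (x : ℂ)) * (g z - G z)) l (nhds 0) := by
    have hpow : Tendsto (fun z : ℂ => (z - (x : ℂ)) ^ (N + 1)) l (nhds 0) := by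
      have := hsub.pow (N + 1)
      simpa using this
    have hmul := hpow.mul hlo'
    rw [mul_zero] at hmul
    refine hmul.congr' ?_
    filter_upwards [hUHP] with z hz
    have hne : (z - (x : ℂ)) ^ N ≠ 0 := pow_ne_zero _ (hzx z hz)
    field_simp [pow_succ]
    ring
  have hzg : Tendsto (fun z : ℂ => (z - (x : ℂ)) * g z) l (nhds 0) := by
    have := hzG.add hzgG
    rw [add_zero] at this
    refine this.congr' ?_
    filter_upwards with z
    ring
  have hfac : ∀ (h : ℂ → ℂ), Tendsto (fun z : ℂ => (z - (x : ℂ)) * h z) l (nhds 0) →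
      Tendsto (fun z : ℂ => (1 / (a₁ : ℂ) - (z - (x : ℂ)) * h z)⁻¹) l (nhds (a₁ : ℂ)) := by
    intro h hh
    have h1 : Tendsto (fun z : ℂ => 1 / (a₁ : ℂ) - (z - (x : ℂ)) * h z) l (nhds (1 / (a₁ : ℂ))) := by
      simpa using (tendsto_const_nhds (x := (1 / (a₁ : ℂ))) (f := l)).sub hh
    have h2 := h1.inv₀ (by simpa using hax)
    simpa using h2
  have hFfac := hfac G hzG
  have hffac := hfac g hzg
  have hmain := (hlo'.mul hFfac).mul hffac
  rw [zero_mul, zero_mul] at hmain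
  refine hmain.congr' ?_
  filter_upwards [hUHP] with z hz
  have hne : z - (x : ℂ) ≠ 0 := hzx z hz
  have hpne : (z - (x : ℂ)) ^ N ≠ 0 := pow_ne_zero _ hne
  have hF' : F z - (a₀ : ℂ) = (z - (x : ℂ)) * (1 / (a₁ : ℂ) - (z - (x : ℂ)) * G z)⁻¹ := by
    rw [hFdef z hz]
    have h2 := hdG z hz
    have h3 := hDG z hz
    field_simp
    ring
  have hf' : f z - (a₀ : ℂ) = (z - (x : ℂ)) * (1 / (a₁ : ℂ) - (z - (x : ℂ)) * g z)⁻¹ := by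
    rw [hfdef z hz]
    have h2 := hdg z hz
    have h3 := hDg z hz
    field_simp
    ring
  show (g z - G z) / (z - (x : ℂ)) ^ N * (1 / (a₁ : ℂ) - (z - (x : ℂ)) * G z)⁻¹ *
      (1 / (a₁ : ℂ) - (z - (x : ℂ)) * g z)⁻¹ = (f z - F z) / (z - (x : ℂ)) ^ (N + 2)
  rw [hid z hz, hF', hf']
  set u := (1 / (a₁ : ℂ) - (z - (x : ℂ)) * G z)⁻¹ with hu
  set v := (1 / (a₁ : ℂ) - (z - (x : ℂ)) * g z)⁻¹ with hv
  rw [pow_add]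
  field_simp
end
end
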